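/- arXiv:2605.21808 — 7 statements merged into one kernel-verified Lean document; each statement's English description precedes it below -/
import Mathlib

section
/- Let k be a normalized CNP kernel on 𝔹_d with coefficient family (b_α), and let m and p be positive integers. For every w ∈ 𝔹_d, the function z ↦ k(z,w)^{-m} = (1 − Σ_{α≠0} b_α z^α \overline{w}^α)^m belongs to the reproducing kernel Hilbert space H(k^p). -/
open scoped BigOperators ComplexConjugate

noncomputable section

/-- The open unit ball in `ℂ^d`. -/
def Ball (d : ℕ) : Set (EuclideanSpace ℂ (Fin d)) := Metric.ball 0 1

/-- The monomial `z ^ α` for a multi-index `α`. -/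
def mono {d : ℕ} (z : EuclideanSpace ℂ (Fin d)) (α : Fin d → ℕ) : ℂ :=
  ∏ j, z j ^ α j

/-- Data of a normalized complete Nevanlinna–Pick kernel on the ball `𝔹_d`:
nonnegative coefficients `b α` for multi-indices `α ≠ 0` (we encode the absence
of the `α = 0` term by `b 0 = 0`), `b α = 1` when `|α| = 1`, and
`Σ_{α ≠ 0} b α |z^α|² < 1` for every `z` in the ball. -/
structure CNPData (d : ℕ) where
  b : (Fin d → ℕ) → ℝ
  b_nonneg : ∀ α, 0 ≤ b α
  b_zero : b 0 = 0
  b_one : ∀ α, (∑ j, α j) = 1 → b α = 1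
  summable_diag : ∀ z ∈ Ball d, Summable fun α : Fin d → ℕ => b α * ‖mono z α‖ ^ 2
  sum_lt_one : ∀ z ∈ Ball d, (∑' α : Fin d → ℕ, b α * ‖mono z α‖ ^ 2) < 1

/-- `S z w = Σ_{α ≠ 0} b_α z^α conj (w^α)`. -/
def CNPData.S {d : ℕ} (K : CNPData d) (z w : EuclideanSpace ℂ (Fin d)) : ℂ :=
  ∑' α : Fin d → ℕ, (K.b α : ℂ) * mono z α * conj (mono w α)

/-- The normalized CNP kernel `k(z,w) = (1 - S z w)⁻¹`. -/
def CNPData.k {d : ℕ} (K : CNPData d) (z w : EuclideanSpace ℂ (Fin d)) : ℂ :=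
  (1 - K.S z w)⁻¹

namespace CNPAux

variable {d : ℕ} (K : CNPData d)

/-- The diagonal sum. -/
def tt (z : EuclideanSpace ℂ (Fin d)) : ℝ := ∑' α : Fin d → ℕ, K.b α * ‖mono z α‖ ^ 2

lemma tt_nonneg (z : EuclideanSpace ℂ (Fin d)) : 0 ≤ tt K z :=
  tsum_nonneg fun α => mul_nonneg (K.b_nonneg α) (by positivity)

lemma tt_lt_one {z : EuclideanSpace ℂ (Fin d)} (hz : z ∈ Ball d) : tt K z < 1 :=
  K.sum_lt_one z hz

lemma norm_term (z w : EuclideanSpace ℂ (Fin d)) (α : Fin d → ℕ) :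
    ‖(K.b α : ℂ) * mono z α * conj (mono w α)‖ =
      Real.sqrt (K.b α * ‖mono z α‖ ^ 2) * Real.sqrt (K.b α * ‖mono w α‖ ^ 2) := by
  rw [Real.sqrt_mul (K.b_nonneg α), Real.sqrt_mul (K.b_nonneg α), Real.sqrt_sq (norm_nonneg _),
    Real.sqrt_sq (norm_nonneg _), norm_mul, norm_mul, RCLike.norm_conj, Complex.norm_real,
    Real.norm_of_nonneg (K.b_nonneg α)]
  have : Real.sqrt (K.b α) * Real.sqrt (K.b α) = K.b α := Real.mul_self_sqrt (K.b_nonneg α)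
  ring_nf
  rw [Real.sq_sqrt (K.b_nonneg α)]
  ring

lemma summable_norm_term {z w : EuclideanSpace ℂ (Fin d)} (hz : z ∈ Ball d) (hw : w ∈ Ball d) :
    Summable fun α : Fin d → ℕ => ‖(K.b α : ℂ) * mono z α * conj (mono w α)‖ := by
  have h := ((K.summable_diag z hz).add (K.summable_diag w hw)).mul_left (1 / 2 : ℝ)
  refine Summable.of_nonneg_of_le (fun α => norm_nonneg _) (fun α => ?_) h
  rw [norm_term]
  set a := Real.sqrt (K.b α * ‖mono z α‖ ^ 2) with ha
  set b := Real.sqrt (K.b α * ‖mono w α‖ ^ 2) with hb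
  have h1 : a ^ 2 = K.b α * ‖mono z α‖ ^ 2 := Real.sq_sqrt (mul_nonneg (K.b_nonneg α) (by positivity))
  have h2 : b ^ 2 = K.b α * ‖mono w α‖ ^ 2 := Real.sq_sqrt (mul_nonneg (K.b_nonneg α) (by positivity))
  nlinarith [sq_nonneg (a - b)]

lemma summable_term {z w : EuclideanSpace ℂ (Fin d)} (hz : z ∈ Ball d) (hw : w ∈ Ball d) :
    Summable fun α : Fin d → ℕ => (K.b α : ℂ) * mono z α * conj (mono w α) :=
  (summable_norm_term K hz hw).of_norm

lemma hasSum_S {z w : EuclideanSpace ℂ (Fin d)} (hz : z ∈ Ball d) (hw : w ∈ Ball d) :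
    HasSum (fun α : Fin d → ℕ => (K.b α : ℂ) * mono z α * conj (mono w α)) (K.S z w) :=
  (summable_term K hz hw).hasSum

lemma norm_S_le {z w : EuclideanSpace ℂ (Fin d)} (hz : z ∈ Ball d) (hw : w ∈ Ball d) :
    ‖K.S z w‖ ≤ Real.sqrt (tt K z) * Real.sqrt (tt K w) := by
  refine le_trans (norm_tsum_le_tsum_norm (summable_norm_term K hz hw)) ?_
  rw [← Real.sqrt_mul (tt_nonneg K z)]
  refine Summable.tsum_le_of_sum_le (summable_norm_term K hz hw) (fun s => ?_)
  rw [Real.le_sqrt (Finset.sum_nonneg fun α _ => norm_nonneg _) (mul_nonneg (tt_nonneg K z) (tt_nonneg K w))]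
  calc (∑ α ∈ s, ‖(K.b α : ℂ) * mono z α * conj (mono w α)‖) ^ 2
      = (∑ α ∈ s, Real.sqrt (K.b α * ‖mono z α‖ ^ 2) * Real.sqrt (K.b α * ‖mono w α‖ ^ 2)) ^ 2 := by
        simp_rw [norm_term]
    _ ≤ (∑ α ∈ s, Real.sqrt (K.b α * ‖mono z α‖ ^ 2) ^ 2) *
        (∑ α ∈ s, Real.sqrt (K.b α * ‖mono w α‖ ^ 2) ^ 2) :=
        Finset.sum_mul_sq_le_sq_mul_sq s _ _
    _ ≤ tt K z * tt K w := by
        refine mul_le_mul ?_ ?_ (Finset.sum_nonneg fun α _ => sq_nonneg _) (tt_nonneg K z)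
        · refine le_trans (le_of_eq ?_) (Summable.sum_le_tsum s (fun α _ => mul_nonneg (K.b_nonneg α) (by positivity)) (K.summable_diag z hz))
          exact Finset.sum_congr rfl fun α _ => Real.sq_sqrt (mul_nonneg (K.b_nonneg α) (by positivity))
        · refine le_trans (le_of_eq ?_) (Summable.sum_le_tsum s (fun α _ => mul_nonneg (K.b_nonneg α) (by positivity)) (K.summable_diag w hw))
          exact Finset.sum_congr rfl fun α _ => Real.sq_sqrt (mul_nonneg (K.b_nonneg α) (by positivity))

lemma norm_S_lt_one {z w : EuclideanSpace ℂ (Fin d)} (hz : z ∈ Ball d) (hw : w ∈ Ball d) :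
    ‖K.S z w‖ < 1 := by
  refine lt_of_le_of_lt (norm_S_le K hz hw) ?_
  have h1 : Real.sqrt (tt K z) < 1 := by
    rw [show (1:ℝ) = Real.sqrt 1 by simp]
    exact Real.sqrt_lt_sqrt (tt_nonneg K z) (tt_lt_one K hz)
  have h2 : Real.sqrt (tt K w) < 1 := by
    rw [show (1:ℝ) = Real.sqrt 1 by simp]
    exact Real.sqrt_lt_sqrt (tt_nonneg K w) (tt_lt_one K hw)
  nlinarith [Real.sqrt_nonneg (tt K z), Real.sqrt_nonneg (tt K w)]

lemma conj_S (z w : EuclideanSpace ℂ (Fin d)) : conj (K.S z w) = K.S w z := by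
  rw [CNPData.S, CNPData.S, RCLike.conj_tsum]
  congr 1; funext α
  simp only [map_mul, Complex.conj_ofReal, Complex.conj_conj]
  ring

lemma S_diag {w : EuclideanSpace ℂ (Fin d)} (hw : w ∈ Ball d) :
    K.S w w = ((tt K w : ℝ) : ℂ) := by
  rw [CNPData.S, tt, Complex.ofReal_tsum]
  congr 1; funext α
  rw [mul_assoc, Complex.mul_conj']
  push_cast
  ring

def qf {d : ℕ} (T : EuclideanSpace ℂ (Fin d) → EuclideanSpace ℂ (Fin d) → ℂ) {ι : Type}
    (s : Finset ι) (x : ι → EuclideanSpace ℂ (Fin d)) (c : ι → ℂ) : ℂ :=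
  ∑ i ∈ s, ∑ j ∈ s, conj (c i) * c j * T (x i) (x j)

def PSDon {d : ℕ} (T : EuclideanSpace ℂ (Fin d) → EuclideanSpace ℂ (Fin d) → ℂ) : Prop :=
  ∀ (ι : Type) (s : Finset ι) (x : ι → EuclideanSpace ℂ (Fin d)),
    (∀ i, x i ∈ Ball d) → ∀ c : ι → ℂ, ∃ r : ℝ, 0 ≤ r ∧ qf T s x c = (r : ℂ)

lemma ofReal_hasSum_repr {ι : Type*} {u : ι → ℝ} {z : ℂ}
    (h : HasSum (fun i => ((u i : ℝ) : ℂ)) z) (hu : ∀ i, 0 ≤ u i) :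
    ∃ r : ℝ, 0 ≤ r ∧ z = (r : ℂ) := by
  have hs' : Summable u := (RCLike.summable_ofReal ℂ).1 h.summable
  exact ⟨∑' i, u i, tsum_nonneg hu, h.unique ((RCLike.hasSum_ofReal ℂ).2 hs'.hasSum)⟩

lemma PSDon.mul_S {T : EuclideanSpace ℂ (Fin d) → EuclideanSpace ℂ (Fin d) → ℂ}
    (hT : PSDon T) : PSDon (fun z w => T z w * K.S z w) := by
  intro ι s x hx c
  choose r hr0 hrq using fun α : Fin d → ℕ => hT ι s x hx (fun i => c i * conj (mono (x i) α))
  have H0 : HasSum (fun α : Fin d → ℕ => ∑ i ∈ s, ∑ j ∈ s,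
      (conj (c i) * c j * T (x i) (x j)) * ((K.b α : ℂ) * mono (x i) α * conj (mono (x j) α)))
      (qf (fun z w => T z w * K.S z w) s x c) := by
    refine hasSum_sum fun i _ => hasSum_sum fun j _ => ?_
    have h := (hasSum_S K (hx i) (hx j)).mul_left (conj (c i) * c j * T (x i) (x j))
    convert h using 1
    · rfl
    · beta_reduce
      ring
  have key : ∀ α : Fin d → ℕ, ((K.b α * r α : ℝ) : ℂ) = ∑ i ∈ s, ∑ j ∈ s,
      (conj (c i) * c j * T (x i) (x j)) * ((K.b α : ℂ) * mono (x i) α * conj (mono (x j) α)) := by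
    intro α
    have hq := hrq α
    rw [qf] at hq
    calc ((K.b α * r α : ℝ) : ℂ) = (K.b α : ℂ) * ((r α : ℝ) : ℂ) := by push_cast; ring
      _ = (K.b α : ℂ) * ∑ i ∈ s, ∑ j ∈ s,
            conj (c i * conj (mono (x i) α)) * (c j * conj (mono (x j) α)) * T (x i) (x j) := by
          rw [hq]
      _ = _ := by
          rw [Finset.mul_sum]
          refine Finset.sum_congr rfl fun i _ => ?_
          rw [Finset.mul_sum]
          refine Finset.sum_congr rfl fun j _ => ?_
          simp only [map_mul, Complex.conj_conj]
          ring
  have H : HasSum (fun α : Fin d → ℕ => ((K.b α * r α : ℝ) : ℂ))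
      (qf (fun z w => T z w * K.S z w) s x c) := by
    convert H0 using 1
    exact funext key
  exact ofReal_hasSum_repr H fun α => mul_nonneg (K.b_nonneg α) (hr0 α)

lemma PSDon_one : PSDon (fun _ _ : EuclideanSpace ℂ (Fin d) => (1 : ℂ)) := by
  intro ι s x _ c
  refine ⟨‖∑ i ∈ s, c i‖ ^ 2, by positivity, ?_⟩
  rw [qf]
  simp only [mul_one]
  rw [← Finset.sum_mul_sum, ← map_sum, mul_comm, Complex.mul_conj']
  push_cast
  ring

lemma PSDon_S_pow (n : ℕ) : PSDon (fun z w => K.S z w ^ n) := by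
  induction n with
  | zero => simpa using PSDon_one (d := d)
  | succ n ih =>
      have h := PSDon.mul_S K ih
      simpa only [pow_succ] using h

lemma conj_S_pow (n : ℕ) (z w : EuclideanSpace ℂ (Fin d)) :
    conj (K.S z w ^ n) = K.S w z ^ n := by rw [map_pow, conj_S]

section CS
variable {d : ℕ}

lemma qf_CS {T : EuclideanSpace ℂ (Fin d) → EuclideanSpace ℂ (Fin d) → ℂ}
    (hT : PSDon T) (hsym : ∀ z w, conj (T z w) = T w z)
    {ι : Type} (s : Finset ι) (x : ι → EuclideanSpace ℂ (Fin d))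
    (hx : ∀ i, x i ∈ Ball d) (c : ι → ℂ)
    {w : EuclideanSpace ℂ (Fin d)} (hw : w ∈ Ball d) {τ r : ℝ}
    (hτ : T w w = (τ : ℂ)) (hr : qf T s x c = (r : ℂ)) :
    ‖∑ i ∈ s, c i * T w (x i)‖ ^ 2 ≤ τ * r := by
  set A := ∑ i ∈ s, c i * T w (x i) with hA
  have hconjA : ∑ i ∈ s, conj (c i) * T (x i) w = conj A := by
    rw [hA, map_sum]
    refine Finset.sum_congr rfl fun i _ => ?_
    rw [map_mul, hsym]
  have key : ∀ t : ℝ, 0 ≤ t ^ 2 * ‖A‖ ^ 2 * τ - 2 * t * ‖A‖ ^ 2 + r := by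
    intro t
    classical
    set lam : ℂ := -(t : ℂ) * A with hlam
    obtain ⟨r', hr'0, hr'⟩ := hT (Option ι) (insert none (s.map Function.Embedding.some))
      (fun o => o.elim w x) (fun o => by cases o <;> simp [hx, hw]) (fun o => o.elim lam c)
    have hnone : (none : Option ι) ∉ s.map Function.Embedding.some := by simp
    rw [qf, Finset.sum_insert hnone] at hr'
    simp only [Finset.sum_insert hnone, Finset.sum_map, Function.Embedding.some_apply,
      Option.elim_none, Option.elim_some, Finset.sum_add_distrib] at hr'
    -- hr' : conj lam * lam * T w w + ∑ j ∈ s, conj lam * c j * T w (x j)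
    --   + (∑ i ∈ s, conj (c i) * lam * T (x i) w + ∑ i ∈ s, ∑ j ∈ s, conj (c i) * c j * T (x i) (x j)) = r'
    have e1 : ∑ j ∈ s, conj lam * c j * T w (x j) = conj lam * A := by
      rw [hA, Finset.mul_sum]
      exact Finset.sum_congr rfl fun j _ => by ring
    have e2 : ∑ i ∈ s, conj (c i) * lam * T (x i) w = lam * conj A := by
      rw [← hconjA, Finset.mul_sum]
      exact Finset.sum_congr rfl fun i _ => by ring
    have e3 : (∑ i ∈ s, ∑ j ∈ s, conj (c i) * c j * T (x i) (x j)) = (r : ℂ) := by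
      rw [← hr, qf]
    rw [e1, e2, e3, hτ] at hr'
    have hAA' : A * conj A = ((‖A‖ : ℝ) : ℂ) ^ 2 := Complex.mul_conj' A
    have hclam : conj lam = -(t : ℂ) * conj A := by
      rw [hlam, map_mul, map_neg, Complex.conj_ofReal]
    rw [hclam, hlam] at hr'
    have hr'2 : ((t ^ 2 * ‖A‖ ^ 2 * τ - 2 * t * ‖A‖ ^ 2 + r : ℝ) : ℂ) = (r' : ℝ) := by
      push_cast at hr' ⊢
      linear_combination hr' + (2 * (t:ℂ) - (t:ℂ) ^ 2 * (τ:ℂ)) * hAA'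
    have : t ^ 2 * ‖A‖ ^ 2 * τ - 2 * t * ‖A‖ ^ 2 + r = r' := by exact_mod_cast hr'2
    linarith
  have hr0 : 0 ≤ r := by have := key 0; simpa using this
  have hτ0 : 0 ≤ τ := by
    obtain ⟨r0, hr00, h0⟩ := hT Unit {Unit.unit} (fun _ => w) (fun _ => hw) (fun _ => 1)
    rw [qf] at h0
    simp only [Finset.sum_singleton, map_one, one_mul, mul_one] at h0
    rw [hτ] at h0
    have : τ = r0 := by exact_mod_cast h0
    rw [this]; exact hr00
  by_cases hA0 : ‖A‖ = 0
  · rw [hA0]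
    simpa using mul_nonneg hτ0 hr0
  · have ha : 0 < ‖A‖ ^ 2 := by positivity
    by_cases hτz : τ = 0
    · exfalso
      have h1 := key ((r + 1) / (2 * ‖A‖ ^ 2))
      rw [hτz] at h1
      have h2a : (2 * ‖A‖ ^ 2) ≠ 0 := by positivity
      have : 2 * ((r + 1) / (2 * ‖A‖ ^ 2)) * ‖A‖ ^ 2 = r + 1 := by
        rw [show 2 * ((r + 1) / (2 * ‖A‖ ^ 2)) * ‖A‖ ^ 2
            = ((r + 1) / (2 * ‖A‖ ^ 2)) * (2 * ‖A‖ ^ 2) from by ring, div_mul_cancel₀ _ h2a]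
      nlinarith
    · have hτp : 0 < τ := lt_of_le_of_ne hτ0 (Ne.symm hτz)
      have h1 := key (1 / τ)
      have h2 : (1 / τ) ^ 2 * ‖A‖ ^ 2 * τ = ‖A‖ ^ 2 / τ := by
        field_simp
      have h3 : 2 * (1 / τ) * ‖A‖ ^ 2 = 2 * (‖A‖ ^ 2 / τ) := by field_simp
      rw [h2, h3] at h1
      have h4 : ‖A‖ ^ 2 / τ ≤ r := by linarith
      calc ‖A‖ ^ 2 = (‖A‖ ^ 2 / τ) * τ := by field_simp
        _ ≤ r * τ := mul_le_mul_of_nonneg_right h4 hτ0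
        _ = τ * r := mul_comm _ _
end CS

lemma choose_sum_aux (q n : ℕ) :
    ∑ k ∈ Finset.range (n + 1), (k + q).choose k = (n + (q + 1)).choose n := by
  induction n with
  | zero => simp
  | succ n ih =>
      rw [Finset.sum_range_succ, ih]
      have h1 : n + 1 + (q + 1) = (n + (q + 1)) + 1 := by omega
      have h2 : n + 1 + q = n + (q + 1) := by omega
      rw [h1, h2, Nat.choose_succ_succ]

lemma choose_le_bound (q n : ℕ) : (n + q).choose n ≤ (q + 1) ^ q * (2 ^ q * (n ^ q + 1)) := by
  have h1 : (n + q).choose n = (n + q).choose q := by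
    have h := Nat.choose_symm (Nat.le_add_right n q)
    simpa using h.symm
  have h2 : (n + q).choose q ≤ (n + q) ^ q := Nat.choose_le_pow _ _
  have h3 : (n + q) ^ q ≤ ((q + 1) * (n + 1)) ^ q :=
    Nat.pow_le_pow_left (by nlinarith) q
  have h4 : ((q + 1) * (n + 1)) ^ q = (q + 1) ^ q * (n + 1) ^ q := mul_pow _ _ _
  have h5 : (n + 1) ^ q ≤ 2 ^ q * (n ^ q + 1) := by
    rcases Nat.eq_zero_or_pos n with hn | hn
    · subst hn
      have h2q : 1 ≤ 2 ^ q := Nat.one_le_two_pow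
      have h0q : 1 ≤ 0 ^ q + 1 := Nat.le_add_left 1 _
      calc (0 + 1) ^ q = 1 := one_pow q
        _ ≤ 2 ^ q * (0 ^ q + 1) := by nlinarith
    · have : (n + 1) ^ q ≤ (2 * n) ^ q := Nat.pow_le_pow_left (by omega) q
      calc (n + 1) ^ q ≤ (2 * n) ^ q := this
        _ = 2 ^ q * n ^ q := mul_pow _ _ _
        _ ≤ 2 ^ q * (n ^ q + 1) := Nat.mul_le_mul_left _ (Nat.le_succ _)
  calc (n + q).choose n = (n + q).choose q := h1
    _ ≤ (n + q) ^ q := h2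
    _ ≤ (q + 1) ^ q * (n + 1) ^ q := by rw [← h4]; exact h3
    _ ≤ (q + 1) ^ q * (2 ^ q * (n ^ q + 1)) := Nat.mul_le_mul_left _ h5

lemma summable_choose_mul_geom (q : ℕ) {x : ℝ} (h0 : 0 ≤ x) (hx : x < 1) :
    Summable fun n : ℕ => ((n + q).choose n : ℝ) * x ^ n := by
  have h1 : Summable fun n : ℕ => (n : ℝ) ^ q * x ^ n := by
    have := summable_pow_mul_geometric_of_norm_lt_one (R := ℝ) q
      (r := x) (by rwa [Real.norm_of_nonneg h0])
    exact this
  have h2 : Summable fun n : ℕ => x ^ n := summable_geometric_of_lt_one h0 hx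
  have hs : Summable fun n : ℕ =>
      ((q + 1 : ℝ) ^ q * 2 ^ q) * ((n : ℝ) ^ q * x ^ n + x ^ n) := (h1.add h2).mul_left _
  refine Summable.of_nonneg_of_le (fun n => by positivity) (fun n => ?_) hs
  have hb : ((n + q).choose n : ℝ) ≤ (q + 1 : ℝ) ^ q * (2 ^ q * ((n : ℝ) ^ q + 1)) := by
    exact_mod_cast Nat.cast_le.2 (choose_le_bound q n)
  have hxn : (0 : ℝ) ≤ x ^ n := pow_nonneg h0 n
  nlinarith [mul_le_mul_of_nonneg_right hb hxn]

lemma hasSum_kpow (q : ℕ) {z w : EuclideanSpace ℂ (Fin d)} (hz : z ∈ Ball d) (hw : w ∈ Ball d) :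
    HasSum (fun n : ℕ => ((n + q).choose n : ℂ) * K.S z w ^ n) (K.k z w ^ (q + 1)) := by
  induction q with
  | zero =>
      simpa [CNPData.k] using hasSum_geometric_of_norm_lt_one (norm_S_lt_one K hz hw)
  | succ q ih =>
      have hnorm : ‖K.S z w‖ < 1 := norm_S_lt_one K hz hw
      have hf : Summable fun n : ℕ => ‖((n + q).choose n : ℂ) * K.S z w ^ n‖ := by
        have := summable_choose_mul_geom q (norm_nonneg (K.S z w)) hnorm
        simpa [norm_mul, norm_pow] using this
      have hg : Summable fun n : ℕ => ‖K.S z w ^ n‖ := by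
        simpa [norm_pow] using summable_geometric_of_lt_one (norm_nonneg _) hnorm
      have H := hasSum_sum_range_mul_of_summable_norm hf hg
      rw [ih.tsum_eq, (hasSum_geometric_of_norm_lt_one hnorm).tsum_eq] at H
      have hterm : ∀ n : ℕ, ∑ k ∈ Finset.range (n + 1),
          (((k + q).choose k : ℂ) * K.S z w ^ k) * K.S z w ^ (n - k)
          = ((n + (q + 1)).choose n : ℂ) * K.S z w ^ n := by
        intro n
        have hcong : ∀ k ∈ Finset.range (n + 1),
            (((k + q).choose k : ℂ) * K.S z w ^ k) * K.S z w ^ (n - k)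
            = ((k + q).choose k : ℂ) * K.S z w ^ n := by
          intro k hk
          have hkn : k + (n - k) = n := by
            have := Finset.mem_range.1 hk; omega
          rw [mul_assoc, ← pow_add, hkn]
        rw [Finset.sum_congr rfl hcong, ← Finset.sum_mul, ← Nat.cast_sum, choose_sum_aux]
      have hk2 : K.k z w ^ (q + 1) * (1 - K.S z w)⁻¹ = K.k z w ^ (q + 2) := by
        rw [CNPData.k]
        ring
      rw [hk2] at H
      exact funext hterm ▸ H

lemma qf_dom (p : ℕ) (hp : 0 < p) (j : ℕ) {ι : Type} (s : Finset ι)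
    (x : ι → EuclideanSpace ℂ (Fin d)) (hx : ∀ i, x i ∈ Ball d) (c : ι → ℂ) :
    ∃ r R : ℝ, 0 ≤ r ∧ qf (fun z w => K.S z w ^ j) s x c = (r : ℂ) ∧
      qf (fun z w => K.k z w ^ p) s x c = (R : ℂ) ∧ r ≤ R := by
  obtain ⟨q, rfl⟩ : ∃ q, p = q + 1 := ⟨p - 1, by omega⟩
  choose r hr0 hrq using fun n : ℕ => PSDon_S_pow K n ι s x hx c
  have H0 : HasSum (fun n : ℕ => ∑ i ∈ s, ∑ j' ∈ s,
      conj (c i) * c j' * (((n + q).choose n : ℂ) * K.S (x i) (x j') ^ n))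
      (qf (fun z w => K.k z w ^ (q + 1)) s x c) := by
    refine hasSum_sum fun i _ => hasSum_sum fun j' _ => ?_
    exact (hasSum_kpow K q (hx i) (hx j')).mul_left _
  have key : ∀ n : ℕ, ((((n + q).choose n : ℝ) * r n : ℝ) : ℂ) = ∑ i ∈ s, ∑ j' ∈ s,
      conj (c i) * c j' * (((n + q).choose n : ℂ) * K.S (x i) (x j') ^ n) := by
    intro n
    have hq := hrq n
    rw [qf] at hq
    calc ((((n + q).choose n : ℝ) * r n : ℝ) : ℂ)
        = ((n + q).choose n : ℂ) * ((r n : ℝ) : ℂ) := by push_cast; ring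
      _ = ((n + q).choose n : ℂ) *
          ∑ i ∈ s, ∑ j' ∈ s, conj (c i) * c j' * K.S (x i) (x j') ^ n := by rw [hq]
      _ = _ := by
          rw [Finset.mul_sum]
          refine Finset.sum_congr rfl fun i _ => ?_
          rw [Finset.mul_sum]
          refine Finset.sum_congr rfl fun j' _ => ?_
          ring
  have H : HasSum (fun n : ℕ => ((((n + q).choose n : ℝ) * r n : ℝ) : ℂ))
      (qf (fun z w => K.k z w ^ (q + 1)) s x c) := by
    convert H0 using 1
    exact funext key
  have hsum : Summable fun n : ℕ => ((n + q).choose n : ℝ) * r n :=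
    (RCLike.summable_ofReal ℂ).1 H.summable
  refine ⟨r j, ∑' n, ((n + q).choose n : ℝ) * r n, hr0 j, hrq j,
    H.unique ((RCLike.hasSum_ofReal ℂ).2 hsum.hasSum), ?_⟩
  have hle : ((j + q).choose j : ℝ) * r j ≤ ∑' n, ((n + q).choose n : ℝ) * r n :=
    Summable.le_tsum hsum j fun n _ => mul_nonneg (by positivity) (hr0 n)
  have h1 : (1 : ℝ) ≤ ((j + q).choose j : ℝ) := by
    exact_mod_cast Nat.one_le_iff_ne_zero.2 (Nat.choose_pos (Nat.le_add_right j q)).ne'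
  nlinarith [hr0 j]

end CNPAux

open CNPAux

/-- for a normalized CNP kernel `k` on `𝔹_d` and positive integers `m, p`,
the function `z ↦ k(z,w)⁻ᵐ` belongs to the RKHS `H(k^p)`.  The RKHS is axiomatized by a
Hilbert space `H` with an injective linear point-evaluation map `J`, kernel elements `kf w`
representing `k(·,w)^p`, and the reproducing property. -/
theorem stmt0 (d m p : ℕ) (hd : 0 < d) (hm : 0 < m) (hp : 0 < p) (K : CNPData d)
    {H : Type} [NormedAddCommGroup H] [InnerProductSpace ℂ H] [CompleteSpace H]
    (J : H →ₗ[ℂ] (Ball d → ℂ)) (hJ : Function.Injective J)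
    (kf : Ball d → H)
    (hkf : ∀ w : Ball d, J (kf w) = fun z : Ball d => K.k ↑z ↑w ^ p)
    (hrep : ∀ (f : H) (w : Ball d), J f w = inner ℂ (kf w) f)
    (w : Ball d) :
    ∃ g : H, J g = fun z : Ball d => (K.k ↑z ↑w)⁻¹ ^ m := by
  classical
  set f : Ball d → ℂ := fun z => (K.k ↑z ↑w)⁻¹ ^ m with hf
  have hfconj : ∀ z : Ball d, conj (f z) = (1 - K.S ↑w ↑z) ^ m := by
    intro z
    have h1 : (K.k ↑z ↑w)⁻¹ = 1 - K.S ↑z ↑w := by rw [CNPData.k, inv_inv]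
    simp only [hf, h1, map_pow, map_sub, map_one, conj_S]
  set π : (Ball d →₀ ℂ) →ₗ[ℂ] H := Finsupp.linearCombination ℂ kf with hπdef
  set L₀ : (Ball d →₀ ℂ) →ₗ[ℂ] ℂ :=
    Finsupp.linearCombination ℂ (fun z : Ball d => conj (f z)) with hLdef
  have hbound : ∀ cc : Ball d →₀ ℂ, ‖L₀ cc‖ ≤ 2 ^ m * ‖π cc‖ := by
    intro cc
    set s : Finset (Ball d) := cc.support with hs
    set x : Ball d → EuclideanSpace ℂ (Fin d) := fun z => ↑z with hx
    have hxb : ∀ i : Ball d, x i ∈ Ball d := fun i => i.2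
    have hπcc : π cc = ∑ i ∈ s, cc i • kf i := by
      rw [hπdef, Finsupp.linearCombination_apply, Finsupp.sum]
    have hQ : qf (fun z w' => K.k z w' ^ p) s x ⇑cc = ((‖π cc‖ ^ 2 : ℝ) : ℂ) := by
      have hππ : (inner ℂ (π cc) (π cc) : ℂ) = qf (fun z w' => K.k z w' ^ p) s x ⇑cc := by
        rw [hπcc, sum_inner, qf]
        refine Finset.sum_congr rfl fun i _ => ?_
        rw [inner_sum]
        refine Finset.sum_congr rfl fun j _ => ?_
        rw [inner_smul_left, inner_smul_right]
        have hkk : (inner ℂ (kf i) (kf j) : ℂ) = K.k (x i) (x j) ^ p := by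
          rw [← hrep (kf j) i, hkf j]
        rw [hkk]
        ring
      rw [← hππ, inner_self_eq_norm_sq_to_K]
      norm_cast
    have hAj : ∀ j : ℕ, ‖∑ i ∈ s, cc i * K.S ↑w (x i) ^ j‖ ≤ ‖π cc‖ := by
      intro j
      obtain ⟨r, R, hr0, hrq, hRq, hrR⟩ := qf_dom K p hp j s x hxb ⇑cc
      have hRval : R = ‖π cc‖ ^ 2 := by
        have h := hRq.symm.trans hQ
        exact_mod_cast h
      have hτ : K.S ↑w ↑w ^ j = (((tt K ↑w) ^ j : ℝ) : ℂ) := by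
        rw [S_diag K w.2]; push_cast; ring
      have hCS := qf_CS (PSDon_S_pow K j)
        (fun z z' => conj_S_pow K j z z') s x hxb ⇑cc w.2 hτ hrq
      have hτ1 : (tt K ↑w) ^ j ≤ 1 :=
        pow_le_one₀ (tt_nonneg K ↑w) (le_of_lt (tt_lt_one K w.2))
      have hτ0 : (0:ℝ) ≤ (tt K ↑w) ^ j := pow_nonneg (tt_nonneg K ↑w) j
      have h2 : ‖∑ i ∈ s, cc i * K.S ↑w (x i) ^ j‖ ^ 2 ≤ ‖π cc‖ ^ 2 := by
        calc ‖∑ i ∈ s, cc i * K.S ↑w (x i) ^ j‖ ^ 2 ≤ (tt K ↑w) ^ j * r := hCS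
          _ ≤ 1 * R := by nlinarith
          _ = ‖π cc‖ ^ 2 := by rw [one_mul, hRval]
      calc ‖∑ i ∈ s, cc i * K.S ↑w (x i) ^ j‖
          = Real.sqrt (‖∑ i ∈ s, cc i * K.S ↑w (x i) ^ j‖ ^ 2) :=
            (Real.sqrt_sq (norm_nonneg _)).symm
        _ ≤ Real.sqrt (‖π cc‖ ^ 2) := Real.sqrt_le_sqrt h2
        _ = ‖π cc‖ := Real.sqrt_sq (norm_nonneg _)
    have hLcc : L₀ cc = ∑ k ∈ Finset.range (m + 1),
        (m.choose k : ℂ) * ((-1) ^ k * ∑ i ∈ s, cc i * K.S ↑w (x i) ^ k) := by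
      rw [hLdef, Finsupp.linearCombination_apply, Finsupp.sum]
      calc ∑ i ∈ s, cc i • conj (f i)
          = ∑ i ∈ s, ∑ k ∈ Finset.range (m + 1),
            (m.choose k : ℂ) * ((-1) ^ k * (cc i * K.S ↑w (x i) ^ k)) := by
            refine Finset.sum_congr rfl fun i _ => ?_
            rw [smul_eq_mul, hfconj i, sub_eq_add_neg, add_comm, add_pow, Finset.mul_sum]
            refine Finset.sum_congr rfl fun k _ => ?_
            rw [neg_pow]
            ring
        _ = _ := by
            rw [Finset.sum_comm]
            refine Finset.sum_congr rfl fun k _ => ?_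
            rw [Finset.mul_sum, Finset.mul_sum]
    rw [hLcc]
    calc ‖∑ k ∈ Finset.range (m + 1),
          (m.choose k : ℂ) * ((-1) ^ k * ∑ i ∈ s, cc i * K.S ↑w (x i) ^ k)‖
        ≤ ∑ k ∈ Finset.range (m + 1),
          ‖(m.choose k : ℂ) * ((-1) ^ k * ∑ i ∈ s, cc i * K.S ↑w (x i) ^ k)‖ :=
          norm_sum_le _ _
      _ ≤ ∑ k ∈ Finset.range (m + 1), (m.choose k : ℝ) * ‖π cc‖ := by
          refine Finset.sum_le_sum fun k _ => ?_
          rw [norm_mul, norm_mul, norm_pow, norm_neg, norm_one, one_pow, one_mul,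
            Complex.norm_natCast]
          exact mul_le_mul_of_nonneg_left (hAj k) (Nat.cast_nonneg _)
      _ = 2 ^ m * ‖π cc‖ := by
          rw [← Finset.sum_mul, ← Nat.cast_sum, Nat.sum_range_choose]
          push_cast
          ring
  -- functional analysis packaging
  have hker : LinearMap.ker π ≤ LinearMap.ker L₀ := by
    intro cc hcc
    rw [LinearMap.mem_ker] at hcc ⊢
    have h := hbound cc
    rw [hcc, norm_zero, mul_zero] at h
    exact norm_le_zero_iff.1 h
  set V : Submodule ℂ H := LinearMap.range π with hV
  set Lv : V →ₗ[ℂ] ℂ :=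
    ((LinearMap.ker π).liftQ L₀ hker).comp (π.quotKerEquivRange.symm : V →ₗ[ℂ] _) with hLv
  have hLvval : ∀ (cc : Ball d →₀ ℂ) (hmem : π cc ∈ V), Lv ⟨π cc, hmem⟩ = L₀ cc := by
    intro cc hmem
    rw [hLv]
    simp only [LinearMap.coe_comp, Function.comp_apply, LinearEquiv.coe_coe]
    rw [LinearMap.quotKerEquivRange_symm_apply_image, Submodule.mkQ_apply,
      Submodule.liftQ_apply]
  have hLvb : ∀ v : V, ‖Lv v‖ ≤ (2 ^ m : ℝ) * ‖v‖ := by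
    rintro ⟨v, hv⟩
    obtain ⟨cc, rfl⟩ := hv
    refine (congrArg norm (hLvval cc _)).trans_le ?_
    exact hbound cc
  set Lc : V →L[ℂ] ℂ := LinearMap.mkContinuous Lv (2 ^ m) hLvb with hLc
  have hdense : DenseRange (V.subtypeL) := by
    have htop : V.topologicalClosure = ⊤ := by
      rw [Submodule.topologicalClosure_eq_top_iff, Submodule.eq_bot_iff]
      intro g hg
      apply hJ
      rw [map_zero]
      funext z
      rw [hrep g z]
      have hmem : kf z ∈ V := ⟨Finsupp.single z 1, by
        rw [hπdef, Finsupp.linearCombination_single, one_smul]⟩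
      have := (Submodule.mem_orthogonal V g).1 hg (kf z) hmem
      simpa using this
    have hdenseV : Dense (V : Set H) := Submodule.dense_iff_topologicalClosure_eq_top.2 htop
    intro y
    simpa [Set.range, Submodule.coe_subtypeL, Subtype.range_coe] using hdenseV y
  have hui : IsUniformInducing (V.subtypeL) := isometry_subtype_coe.isUniformInducing
  set ψ : H →L[ℂ] ℂ := Lc.extend V.subtypeL with hψ
  refine ⟨(InnerProductSpace.toDual ℂ H).symm ψ, ?_⟩
  funext z
  rw [hrep _ z]
  have hmem : kf z ∈ V := ⟨Finsupp.single z 1, by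
    rw [hπdef, Finsupp.linearCombination_single, one_smul]⟩
  have h1 : (inner ℂ ((InnerProductSpace.toDual ℂ H).symm ψ) (kf z) : ℂ) = ψ (kf z) :=
    InnerProductSpace.toDual_symm_apply
  have h2 : ψ (kf z) = Lc ⟨kf z, hmem⟩ := by
    rw [hψ]
    exact ContinuousLinearMap.extend_eq Lc hdense hui ⟨kf z, hmem⟩
  have h3 : Lc ⟨kf z, hmem⟩ = conj (f z) := by
    rw [hLc, LinearMap.mkContinuous_apply]
    have hmem' : π (Finsupp.single z 1) ∈ V := LinearMap.mem_range_self π _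
    have heq : (⟨kf z, hmem⟩ : V) = ⟨π (Finsupp.single z 1), hmem'⟩ := by
      apply Subtype.ext
      simp only [hπdef, Finsupp.linearCombination_single, one_smul]
    rw [heq, hLvval]
    rw [hLdef, Finsupp.linearCombination_single, one_smul]
  have h4 : (inner ℂ (kf z) ((InnerProductSpace.toDual ℂ H).symm ψ) : ℂ)
      = conj (conj (f z)) := by
    rw [← inner_conj_symm, h1, h2, h3]
  rw [h4, Complex.conj_conj]
end
end

section
/- Let k be a normalized CNP kernel on 𝔹_d with coefficient family (b_α) and let p be a positive integer. For every w ∈ 𝔹_d, the function φ_w(z) = k(z,w)^{-1} = 1 − Σ_{α≠0} b_α z^α \overline{w}^α is a multiplier of H(k^p): for every f ∈ H(k^p) the pointwise product φ_w · f belongs to H(k^p). Likewise, the function ψ_w(z) = Σ_{α≠0} b_α z^α \overline{w}^α is a multiplier of H(k^p). -/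
open scoped BigOperators ComplexConjugate

noncomputable section

section Aux

open Complex
open scoped ENNReal

local notation "⟪" x ", " y "⟫" => @inner ℂ _ _ x y

namespace CNPData

variable {d : ℕ} (K : CNPData d)

/-- The diagonal sum `Σ b_α |z^α|²`. -/
def sdiag (z : EuclideanSpace ℂ (Fin d)) : ℝ := ∑' α : Fin d → ℕ, K.b α * ‖mono z α‖ ^ 2

lemma sdiag_nonneg (z : EuclideanSpace ℂ (Fin d)) : 0 ≤ K.sdiag z :=
  tsum_nonneg fun α => mul_nonneg (K.b_nonneg α) (by positivity)

lemma sdiag_lt_one (z : Ball d) : K.sdiag ↑z < 1 := K.sum_lt_one _ z.2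

/-- The square-root-weighted monomial family. -/
def Bfun (z : EuclideanSpace ℂ (Fin d)) : (Fin d → ℕ) → ℂ :=
  fun α => (Real.sqrt (K.b α) : ℂ) * mono z α

lemma norm_Bfun_sq (z : EuclideanSpace ℂ (Fin d)) (α : Fin d → ℕ) :
    ‖K.Bfun z α‖ ^ 2 = K.b α * ‖mono z α‖ ^ 2 := by
  rw [Bfun, norm_mul, mul_pow, Complex.norm_real, Real.norm_eq_abs, _root_.sq_abs,
    Real.sq_sqrt (K.b_nonneg α)]

lemma memlp_Bfun (z : Ball d) : Memℓp (K.Bfun ↑z) 2 := by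
  apply memℓp_gen
  have h2 : (2 : ℝ≥0∞).toReal = (2 : ℕ) := by norm_num
  have := K.summable_diag ↑z z.2
  apply Summable.congr this
  intro α
  rw [h2, Real.rpow_natCast, K.norm_Bfun_sq]

/-- The ℓ² vector `B z = (√b_α z^α)_α`. -/
def Bvec (z : Ball d) : lp (fun _ : Fin d → ℕ => ℂ) 2 := ⟨K.Bfun ↑z, K.memlp_Bfun z⟩

lemma S_eq_inner (z z' : Ball d) : K.S ↑z ↑z' = ⟪K.Bvec z', K.Bvec z⟫ := by
  rw [lp.inner_eq_tsum]
  apply tsum_congr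
  intro α
  have hs : ((Real.sqrt (K.b α) : ℂ)) ^ 2 = (K.b α : ℂ) := by
    rw [sq, ← Complex.ofReal_mul, Real.mul_self_sqrt (K.b_nonneg α)]
  rw [RCLike.inner_apply']
  show (K.b α : ℂ) * mono (↑z) α * conj (mono (↑z') α)
      = conj (K.Bfun ↑z' α) * K.Bfun ↑z α
  rw [Bfun, Bfun, map_mul, Complex.conj_ofReal]
  linear_combination -(mono (↑z) α * conj (mono (↑z') α)) * hs

lemma S_diag (z : Ball d) : K.S ↑z ↑z = (K.sdiag ↑z : ℂ) := by
  rw [CNPData.S, sdiag, Complex.ofReal_tsum]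
  apply tsum_congr
  intro α
  rw [Complex.ofReal_mul, mul_assoc, Complex.mul_conj]
  congr 1
  rw [Complex.normSq_eq_norm_sq]

lemma norm_Bvec_sq (z : Ball d) : ‖K.Bvec z‖ ^ 2 = K.sdiag ↑z := by
  have h1 : ⟪K.Bvec z, K.Bvec z⟫ = ((‖K.Bvec z‖ : ℂ)) ^ 2 := inner_self_eq_norm_sq_to_K _
  rw [← K.S_eq_inner z z, K.S_diag z] at h1
  exact_mod_cast h1.symm

lemma norm_Bvec_lt_one (z : Ball d) : ‖K.Bvec z‖ < 1 := by
  have h := K.norm_Bvec_sq z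
  have h2 := K.sdiag_lt_one z
  nlinarith [norm_nonneg (K.Bvec z)]

lemma norm_S_lt_one (z z' : Ball d) : ‖K.S ↑z ↑z'‖ < 1 := by
  rw [K.S_eq_inner]
  calc ‖⟪K.Bvec z', K.Bvec z⟫‖ ≤ ‖K.Bvec z'‖ * ‖K.Bvec z‖ := norm_inner_le_norm _ _
  _ < 1 := by
      have h1 := K.norm_Bvec_lt_one z
      have h2 := K.norm_Bvec_lt_one z'
      nlinarith [norm_nonneg (K.Bvec z), norm_nonneg (K.Bvec z')]

lemma conj_S (z z' : Ball d) : conj (K.S ↑z ↑z') = K.S ↑z' ↑z := by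
  rw [K.S_eq_inner, K.S_eq_inner, inner_conj_symm]

lemma one_sub_S_ne (z z' : Ball d) : 1 - K.S ↑z ↑z' ≠ 0 := by
  intro h
  have h1 : K.S ↑z ↑z' = 1 := by linear_combination -h
  have h2 := K.norm_S_lt_one z z'
  rw [h1] at h2
  simp at h2

lemma k_geom (z z' : Ball d) : K.k ↑z ↑z' = ∑' n : ℕ, (K.S ↑z ↑z') ^ n :=
  (tsum_geometric_of_norm_lt_one (K.norm_S_lt_one z z')).symm

lemma conj_k (z z' : Ball d) : conj (K.k ↑z ↑z') = K.k ↑z' ↑z := by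
  rw [CNPData.k, CNPData.k, map_inv₀, map_sub, map_one, K.conj_S]

lemma k_pow_identity (p : ℕ) (hp : 0 < p) (z z' : Ball d) :
    (1 - K.S ↑z ↑z') * K.k ↑z ↑z' ^ p = K.k ↑z ↑z' ^ (p - 1) := by
  obtain ⟨q, rfl⟩ : ∃ q, p = q + 1 := ⟨p - 1, (Nat.succ_pred_eq_of_pos hp).symm⟩
  have h := K.one_sub_S_ne z z'
  rw [CNPData.k]
  rw [Nat.add_sub_cancel, pow_succ', ← mul_assoc, mul_inv_cancel₀ h, one_mul]

end CNPData

end Aux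

section MatrixAux

open Complex Matrix
open scoped ComplexOrder

local notation "⟪" x ", " y "⟫" => @inner ℂ _ _ x y

variable {ι : Type} [Fintype ι]

/-- Quadratic form of a complex matrix. -/
def qf (M : Matrix ι ι ℂ) (x : ι → ℂ) : ℂ :=
  ∑ i, ∑ j, conj (x i) * M i j * x j

lemma qf_eq_dot (M : Matrix ι ι ℂ) (x : ι → ℂ) :
    qf M x = dotProduct (star x) (M *ᵥ x) := by
  simp only [qf, dotProduct, Matrix.mulVec, Pi.star_apply, Complex.star_def, Finset.mul_sum]
  apply Finset.sum_congr rfl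
  intro i _
  apply Finset.sum_congr rfl
  intro j _
  ring

lemma conj_qf (M : Matrix ι ι ℂ) (hherm : ∀ i j, conj (M j i) = M i j) (x : ι → ℂ) :
    conj (qf M x) = qf M x := by
  have h : conj (qf M x) = ∑ i, ∑ j, conj (x j) * M j i * x i := by
    unfold qf
    rw [map_sum]
    apply Finset.sum_congr rfl
    intro i _
    rw [map_sum]
    apply Finset.sum_congr rfl
    intro j _
    rw [_root_.map_mul, _root_.map_mul, Complex.conj_conj, hherm j i]
    ring
  rw [h, Finset.sum_comm]
  rfl

lemma posSemidef_of_qf (M : Matrix ι ι ℂ) (hherm : ∀ i j, conj (M j i) = M i j)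
    (hpos : ∀ x : ι → ℂ, 0 ≤ (qf M x).re) : M.PosSemidef := by
  refine Matrix.PosSemidef.of_dotProduct_mulVec_nonneg ?_ ?_
  · ext i j
    rw [Matrix.conjTranspose_apply, Complex.star_def]
    exact hherm i j
  · intro x
    rw [← qf_eq_dot]
    rw [Complex.le_def]
    refine ⟨by simpa using hpos x, ?_⟩
    have := conj_qf M hherm x
    have him := Complex.conj_eq_iff_im.mp this
    simp [him]

lemma re_qf_nonneg {M : Matrix ι ι ℂ} (h : M.PosSemidef) (x : ι → ℂ) :
    0 ≤ (qf M x).re := by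
  have := h.dotProduct_mulVec_nonneg x
  rw [← qf_eq_dot] at this
  exact (Complex.le_def.mp this).1

lemma isHermitian_entry {M : Matrix ι ι ℂ} (h : M.IsHermitian) (i j : ι) :
    conj (M j i) = M i j := by
  conv_rhs => rw [← h]
  rw [Matrix.conjTranspose_apply, Complex.star_def]

/-- Schur product theorem. -/
lemma posSemidef_hadamard {M N : Matrix ι ι ℂ} (hM : M.PosSemidef) (hN : N.PosSemidef) :
    Matrix.PosSemidef (Matrix.of fun i j => M i j * N i j) := by
  obtain ⟨B, hB⟩ : ∃ B : Matrix ι ι ℂ, M = Bᴴ * B := by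
    classical
    open scoped MatrixOrder Matrix.Norms.L2Operator in
    exact CStarAlgebra.nonneg_iff_eq_star_mul_self.mp hM.nonneg
  apply posSemidef_of_qf
  · intro i j
    rw [Matrix.of_apply, Matrix.of_apply, _root_.map_mul,
      isHermitian_entry hM.isHermitian, isHermitian_entry hN.isHermitian]
  · intro x
    have expand : ∀ k, qf N (fun i => B k i * x i)
        = ∑ i, ∑ j, conj (B k i) * conj (x i) * N i j * (B k j * x j) := by
      intro k
      unfold qf
      apply Finset.sum_congr rfl
      intro i _
      apply Finset.sum_congr rfl
      intro j _
      rw [_root_.map_mul]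
    have key : qf (Matrix.of fun i j => M i j * N i j) x
        = ∑ i, ∑ j, ∑ k, conj (B k i) * conj (x i) * N i j * (B k j * x j) := by
      unfold qf
      apply Finset.sum_congr rfl
      intro i _
      apply Finset.sum_congr rfl
      intro j _
      rw [Matrix.of_apply, hB, Matrix.mul_apply]
      simp only [Matrix.conjTranspose_apply, Complex.star_def]
      rw [Finset.sum_mul, Finset.mul_sum, Finset.sum_mul]
      apply Finset.sum_congr rfl
      intro k _
      ring
    have key2 : qf (Matrix.of fun i j => M i j * N i j) x
        = ∑ k, qf N (fun i => B k i * x i) := by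
      rw [key]
      calc (∑ i, ∑ j, ∑ k, conj (B k i) * conj (x i) * N i j * (B k j * x j))
          = ∑ i, ∑ k, ∑ j, conj (B k i) * conj (x i) * N i j * (B k j * x j) :=
            Finset.sum_congr rfl (fun i _ => Finset.sum_comm)
        _ = ∑ k, ∑ i, ∑ j, conj (B k i) * conj (x i) * N i j * (B k j * x j) :=
            Finset.sum_comm
        _ = ∑ k, qf N (fun i => B k i * x i) :=
            Finset.sum_congr rfl (fun k _ => (expand k).symm)
    rw [key2, Complex.re_sum]
    exact Finset.sum_nonneg fun k _ => re_qf_nonneg hN _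

lemma posSemidef_ones : Matrix.PosSemidef (Matrix.of fun _ _ : ι => (1 : ℂ)) := by
  apply posSemidef_of_qf
  · intro i j; simp
  · intro x
    have : qf (Matrix.of fun _ _ : ι => (1 : ℂ)) x
        = conj (∑ i, x i) * (∑ i, x i) := by
      unfold qf
      rw [map_sum, Finset.sum_mul]
      apply Finset.sum_congr rfl
      intro i _
      rw [Finset.mul_sum]
      apply Finset.sum_congr rfl
      intro j _
      simp
    rw [this, mul_comm, Complex.mul_conj]
    simp [Complex.normSq_nonneg]

lemma posSemidef_hadamard_pow {M : Matrix ι ι ℂ} (hM : M.PosSemidef) (m : ℕ) :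
    Matrix.PosSemidef (Matrix.of fun i j => M i j ^ m) := by
  induction m with
  | zero => simpa using posSemidef_ones
  | succ n ih =>
      have := posSemidef_hadamard ih hM
      convert this using 2
      funext i j
      rw [Matrix.of_apply, pow_succ]

/-- Gram matrices are PSD. -/
lemma posSemidef_gram {E : Type} [NormedAddCommGroup E] [InnerProductSpace ℂ E]
    (u : ι → E) : Matrix.PosSemidef (Matrix.of fun i j => (⟪u j, u i⟫ : ℂ)) := by
  apply posSemidef_of_qf
  · intro i j
    simp [inner_conj_symm]
  · intro x
    have key : qf (Matrix.of fun i j => (⟪u j, u i⟫ : ℂ)) x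
        = ⟪∑ i, conj (x i) • u i, ∑ i, conj (x i) • u i⟫ := by
      rw [sum_inner]
      unfold qf
      rw [Finset.sum_comm]
      apply Finset.sum_congr rfl
      intro i _
      rw [inner_smul_left, inner_sum, Finset.mul_sum]
      apply Finset.sum_congr rfl
      intro j _
      rw [inner_smul_right]
      simp only [Matrix.of_apply, Complex.conj_conj]
      ring
    rw [key]
    simpa using inner_self_nonneg (𝕜 := ℂ) (x := ∑ i, conj (x i) • u i)

/-- Gram matrix corrected by a vector of norm at most one is PSD. -/
lemma posSemidef_gram_corr {E : Type} [NormedAddCommGroup E] [InnerProductSpace ℂ E]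
    (u : ι → E) (e : E) (he : ‖e‖ ≤ 1) :
    Matrix.PosSemidef (Matrix.of fun i j =>
      (⟪u j, u i⟫ : ℂ) - ⟪e, u i⟫ * ⟪u j, e⟫) := by
  apply posSemidef_of_qf
  · intro i j
    simp only [Matrix.of_apply, map_sub, _root_.map_mul, inner_conj_symm]
    ring
  · intro x
    set y := ∑ i, conj (x i) • u i with hy
    have key : qf (Matrix.of fun i j =>
        (⟪u j, u i⟫ : ℂ) - ⟪e, u i⟫ * ⟪u j, e⟫) x
        = ⟪y, y⟫ - conj (⟪y, e⟫ : ℂ) * ⟪y, e⟫ := by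
      have h1 : qf (Matrix.of fun i j => (⟪u j, u i⟫ : ℂ)) x = ⟪y, y⟫ := by
        rw [sum_inner]
        unfold qf
        rw [Finset.sum_comm]
        apply Finset.sum_congr rfl
        intro i _
        rw [inner_smul_left, inner_sum, Finset.mul_sum]
        apply Finset.sum_congr rfl
        intro j _
        rw [inner_smul_right]
        simp only [Matrix.of_apply, Complex.conj_conj]
        ring
      have ht : (⟪y, e⟫ : ℂ) = ∑ j, x j * ⟪u j, e⟫ := by
        rw [sum_inner]
        apply Finset.sum_congr rfl
        intro j _
        rw [inner_smul_left, Complex.conj_conj]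
      have htc : conj (⟪y, e⟫ : ℂ) = ∑ i, conj (x i) * ⟪e, u i⟫ := by
        rw [ht, map_sum]
        apply Finset.sum_congr rfl
        intro i _
        rw [_root_.map_mul, inner_conj_symm]
      have h2 : qf (Matrix.of fun i j => (⟪e, u i⟫ : ℂ) * ⟪u j, e⟫) x
          = conj (⟪y, e⟫ : ℂ) * ⟪y, e⟫ := by
        rw [htc, ht, Finset.sum_mul]
        unfold qf
        apply Finset.sum_congr rfl
        intro i _
        rw [Finset.mul_sum]
        apply Finset.sum_congr rfl
        intro j _
        simp only [Matrix.of_apply]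
        ring
      rw [← h1, ← h2]
      unfold qf
      rw [← Finset.sum_sub_distrib]
      apply Finset.sum_congr rfl
      intro i _
      rw [← Finset.sum_sub_distrib]
      apply Finset.sum_congr rfl
      intro j _
      simp only [Matrix.of_apply]
      ring
    rw [key]
    have hnorm : ‖(⟪y, e⟫ : ℂ)‖ ≤ ‖y‖ := by
      calc ‖(⟪y, e⟫ : ℂ)‖ ≤ ‖y‖ * ‖e‖ := norm_inner_le_norm _ _
      _ ≤ ‖y‖ * 1 := by
          apply mul_le_mul_of_nonneg_left he (norm_nonneg _)
      _ = ‖y‖ := mul_one _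
    have h3 : (conj (⟪y, e⟫ : ℂ) * ⟪y, e⟫) = ((Complex.normSq ⟪y, e⟫ : ℝ) : ℂ) := by
      rw [mul_comm, Complex.mul_conj]
    rw [h3, Complex.sub_re, Complex.ofReal_re]
    have h4 : Complex.re (⟪y, y⟫ : ℂ) = ‖y‖ ^ 2 := by
      have := @inner_self_eq_norm_sq_to_K ℂ _ _ _ _ y
      rw [this]
      norm_cast
    rw [h4]
    have h5 : Complex.normSq (⟪y, e⟫ : ℂ) = ‖(⟪y, e⟫ : ℂ)‖ ^ 2 := by
      rw [Complex.normSq_eq_norm_sq]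
    rw [h5]
    nlinarith [norm_nonneg y, norm_nonneg (⟪y, e⟫ : ℂ)]

end MatrixAux

section CNPMatrix

open Complex Matrix
open scoped ComplexOrder

local notation "⟪" x ", " y "⟫" => @inner ℂ _ _ x y

namespace CNPData

variable {d : ℕ} (K : CNPData d) {ι : Type} [Fintype ι] (v : ι → Ball d)

lemma posSemidef_Smat :
    Matrix.PosSemidef (Matrix.of fun i j => K.S ↑(v i) ↑(v j)) := by
  have h := posSemidef_gram (fun i => K.Bvec (v i))
  have he : (Matrix.of fun i j => K.S ↑(v i) ↑(v j))
      = Matrix.of fun i j => ⟪K.Bvec (v j), K.Bvec (v i)⟫ := by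
    ext i j
    exact K.S_eq_inner (v i) (v j)
  rw [he]
  exact h

lemma posSemidef_Kmat1 :
    Matrix.PosSemidef (Matrix.of fun i j => K.k ↑(v i) ↑(v j)) := by
  apply posSemidef_of_qf
  · intro i j
    simp only [Matrix.of_apply]
    exact K.conj_k (v j) (v i)
  · intro x
    have hsum : ∀ i j : ι, Summable (fun n : ℕ =>
        conj (x i) * (K.S ↑(v i) ↑(v j)) ^ n * x j) := fun i j =>
      (((summable_geometric_of_norm_lt_one (K.norm_S_lt_one (v i) (v j))).mul_left
        (conj (x i))).mul_right (x j))
    have hqf : qf (Matrix.of fun i j => K.k ↑(v i) ↑(v j)) x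
        = ∑' n : ℕ, qf (Matrix.of fun i j => (K.S ↑(v i) ↑(v j)) ^ n) x := by
      unfold qf
      have step1 : ∀ i j : ι, conj (x i) * (Matrix.of fun i j => K.k ↑(v i) ↑(v j)) i j * x j
          = ∑' n : ℕ, conj (x i) * (K.S ↑(v i) ↑(v j)) ^ n * x j := by
        intro i j
        simp only [Matrix.of_apply]
        rw [K.k_geom (v i) (v j), ← tsum_mul_left, ← tsum_mul_right]
      calc (∑ i, ∑ j, conj (x i) * (Matrix.of fun i j => K.k ↑(v i) ↑(v j)) i j * x j)
          = ∑ i, ∑ j, ∑' n : ℕ, conj (x i) * (K.S ↑(v i) ↑(v j)) ^ n * x j :=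
            Finset.sum_congr rfl fun i _ => Finset.sum_congr rfl fun j _ => step1 i j
        _ = ∑ i, ∑' n : ℕ, ∑ j, conj (x i) * (K.S ↑(v i) ↑(v j)) ^ n * x j :=
            Finset.sum_congr rfl fun i _ => (Summable.tsum_finsetSum fun j _ => hsum i j).symm
        _ = ∑' n : ℕ, ∑ i, ∑ j, conj (x i) * (K.S ↑(v i) ↑(v j)) ^ n * x j :=
            (Summable.tsum_finsetSum fun i _ => summable_sum fun j _ => hsum i j).symm
        _ = ∑' n : ℕ, ∑ i, ∑ j, conj (x i)
              * (Matrix.of fun i j => (K.S ↑(v i) ↑(v j)) ^ n) i j * x j := by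
            apply tsum_congr; intro n
            simp only [Matrix.of_apply]
    have hsum2 : Summable fun n : ℕ =>
        qf (Matrix.of fun i j => (K.S ↑(v i) ↑(v j)) ^ n) x := by
      have : ∀ n : ℕ, qf (Matrix.of fun i j => (K.S ↑(v i) ↑(v j)) ^ n) x
          = ∑ i, ∑ j, conj (x i) * (K.S ↑(v i) ↑(v j)) ^ n * x j := by
        intro n; unfold qf; simp only [Matrix.of_apply]
      apply Summable.congr _ fun n => (this n).symm
      exact summable_sum fun i _ => summable_sum fun j _ => hsum i j
    have hre : (qf (Matrix.of fun i j => K.k ↑(v i) ↑(v j)) x).re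
        = ∑' n : ℕ, (qf (Matrix.of fun i j => (K.S ↑(v i) ↑(v j)) ^ n) x).re := by
      rw [hqf]
      exact Complex.reCLM.map_tsum hsum2
    rw [hre]
    apply tsum_nonneg
    intro n
    have hS := K.posSemidef_Smat v
    have hpow := posSemidef_hadamard_pow hS n
    have heq : (Matrix.of fun i j => (K.S ↑(v i) ↑(v j)) ^ n)
        = Matrix.of fun i j => ((Matrix.of fun i j => K.S ↑(v i) ↑(v j)) i j) ^ n := rfl
    rw [heq]
    exact re_qf_nonneg hpow x

lemma posSemidef_Kmat (p : ℕ) :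
    Matrix.PosSemidef (Matrix.of fun i j => K.k ↑(v i) ↑(v j) ^ p) := by
  have h := posSemidef_hadamard_pow (K.posSemidef_Kmat1 v) p
  exact h

lemma key_ineq (p : ℕ) (hp : 0 < p) (w : Ball d) (x : ι → ℂ) :
    (∑ i, ∑ j, conj (x i * conj (K.S ↑(v i) ↑w)) * (x j * conj (K.S ↑(v j) ↑w))
      * K.k ↑(v i) ↑(v j) ^ p).re
    ≤ (∑ i, ∑ j, conj (x i) * x j * K.k ↑(v i) ↑(v j) ^ p).re := by
  set ψ : ι → ℂ := fun i => K.S ↑(v i) ↑w with hψ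
  -- PSD matrices
  have hD : Matrix.PosSemidef (Matrix.of fun i j =>
      K.S ↑(v i) ↑(v j) - ψ i * conj (ψ j)) := by
    have h := posSemidef_gram_corr (fun i => K.Bvec (v i)) (K.Bvec w)
      (le_of_lt (K.norm_Bvec_lt_one w))
    have he : (Matrix.of fun i j => K.S ↑(v i) ↑(v j) - ψ i * conj (ψ j))
        = Matrix.of fun i j => (⟪K.Bvec (v j), K.Bvec (v i)⟫ : ℂ)
            - ⟪K.Bvec w, K.Bvec (v i)⟫ * ⟪K.Bvec (v j), K.Bvec w⟫ := by
      ext i j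
      rw [Matrix.of_apply, Matrix.of_apply, ← K.S_eq_inner (v i) (v j),
        ← K.S_eq_inner (v i) w, ← K.S_eq_inner w (v j), ← K.conj_S (v j) w]
    rw [he]
    exact h
  have hDK : Matrix.PosSemidef (Matrix.of fun i j =>
      (K.S ↑(v i) ↑(v j) - ψ i * conj (ψ j)) * K.k ↑(v i) ↑(v j) ^ p) := by
    have h := posSemidef_hadamard hD (K.posSemidef_Kmat v p)
    exact h
  have hK1 : Matrix.PosSemidef (Matrix.of fun i j => K.k ↑(v i) ↑(v j) ^ (p - 1)) :=
    K.posSemidef_Kmat v (p - 1)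
  have hsplit : (∑ i, ∑ j, conj (x i) * x j * K.k ↑(v i) ↑(v j) ^ p)
      = (∑ i, ∑ j, conj (x i * conj (ψ i)) * (x j * conj (ψ j)) * K.k ↑(v i) ↑(v j) ^ p)
        + qf (Matrix.of fun i j => K.k ↑(v i) ↑(v j) ^ (p - 1)) x
        + qf (Matrix.of fun i j =>
            (K.S ↑(v i) ↑(v j) - ψ i * conj (ψ j)) * K.k ↑(v i) ↑(v j) ^ p) x := by
    unfold qf
    rw [← Finset.sum_add_distrib, ← Finset.sum_add_distrib]
    apply Finset.sum_congr rfl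
    intro i _
    rw [← Finset.sum_add_distrib, ← Finset.sum_add_distrib]
    apply Finset.sum_congr rfl
    intro j _
    simp only [Matrix.of_apply, _root_.map_mul, Complex.conj_conj]
    have hki := K.k_pow_identity p hp (v i) (v j)
    linear_combination (conj (x i) * x j) * hki
  have h1 := re_qf_nonneg hK1 x
  have h2 := re_qf_nonneg hDK x
  have := congrArg Complex.re hsplit
  rw [Complex.add_re, Complex.add_re] at this
  rw [hψ] at this
  linarith

end CNPData

end CNPMatrix

/-- for every `w ∈ 𝔹_d`, the functions `φ_w = k(·,w)⁻¹` and
`ψ_w(z) = Σ_{α≠0} b_α z^α conj(w^α)` are multipliers of `H(k^p)`: multiplying any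
member of `H(k^p)` pointwise by them lands back in `H(k^p)`. -/
theorem stmt1 (d p : ℕ) (hd : 0 < d) (hp : 0 < p) (K : CNPData d)
    {H : Type} [NormedAddCommGroup H] [InnerProductSpace ℂ H] [CompleteSpace H]
    (J : H →ₗ[ℂ] (Ball d → ℂ)) (hJ : Function.Injective J)
    (kf : Ball d → H)
    (hkf : ∀ w : Ball d, J (kf w) = fun z : Ball d => K.k ↑z ↑w ^ p)
    (hrep : ∀ (f : H) (w : Ball d), J f w = inner ℂ (kf w) f)
    (w : Ball d) :
    (∀ f : H, ∃ g : H, J g = fun z : Ball d => (K.k ↑z ↑w)⁻¹ * J f z) ∧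
    (∀ f : H, ∃ g : H, J g = fun z : Ball d => K.S ↑z ↑w * J f z) := by
  classical
  have part2 : ∀ f : H, ∃ g : H, J g = fun z : Ball d => K.S ↑z ↑w * J f z := by
    intro f
    -- Gram identity
    have hGram : ∀ z z' : Ball d, (inner ℂ (kf z) (kf z') : ℂ) = K.k ↑z ↑z' ^ p := by
      intro z z'
      rw [← hrep (kf z') z, hkf z']
    -- expansion of norms of finite combinations
    have hexp : ∀ (s : Finset (Ball d)) (a : Ball d → ℂ),
        (inner ℂ (∑ z ∈ s, a z • kf z) (∑ z ∈ s, a z • kf z) : ℂ)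
        = ∑ z ∈ s, ∑ z' ∈ s, conj (a z) * a z' * K.k ↑z ↑z' ^ p := by
      intro s a
      rw [sum_inner]
      apply Finset.sum_congr rfl
      intro z _
      rw [inner_smul_left, inner_sum, Finset.mul_sum]
      apply Finset.sum_congr rfl
      intro z' _
      rw [inner_smul_right, hGram]
      ring
    -- the key norm estimate
    have hbound : ∀ (s : Finset (Ball d)) (a : Ball d → ℂ),
        ‖∑ z ∈ s, (a z * conj (K.S ↑z ↑w)) • kf z‖ ≤ ‖∑ z ∈ s, a z • kf z‖ := by
      intro s a
      have hqA : (‖∑ z ∈ s, (a z * conj (K.S ↑z ↑w)) • kf z‖ : ℝ) ^ 2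
          = (∑ z ∈ s, ∑ z' ∈ s, conj (a z * conj (K.S ↑z ↑w))
              * (a z' * conj (K.S ↑z' ↑w)) * K.k ↑z ↑z' ^ p).re := by
        have := hexp s (fun z => a z * conj (K.S ↑z ↑w))
        have h2 := inner_self_eq_norm_sq (𝕜 := ℂ)
          (∑ z ∈ s, (a z * conj (K.S ↑z ↑w)) • kf z)
        rw [this] at h2
        have h4 : (∑ z ∈ s, ∑ z' ∈ s, conj (a z * conj (K.S ↑z ↑w))
            * (a z' * conj (K.S ↑z' ↑w)) * K.k ↑z ↑z' ^ p).re
            = ‖∑ z ∈ s, (a z * conj (K.S ↑z ↑w)) • kf z‖ ^ 2 := by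
          simpa [RCLike.re_to_complex] using h2
        exact h4.symm
      have hqB : (‖∑ z ∈ s, a z • kf z‖ : ℝ) ^ 2
          = (∑ z ∈ s, ∑ z' ∈ s, conj (a z) * a z' * K.k ↑z ↑z' ^ p).re := by
        have := hexp s a
        have h2 := inner_self_eq_norm_sq (𝕜 := ℂ) (∑ z ∈ s, a z • kf z)
        rw [this] at h2
        have h4 : (∑ z ∈ s, ∑ z' ∈ s, conj (a z) * a z' * K.k ↑z ↑z' ^ p).re
            = ‖∑ z ∈ s, a z • kf z‖ ^ 2 := by
          simpa [RCLike.re_to_complex] using h2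
        exact h4.symm
      -- move to the attached index type and apply key_ineq
      have hkey : (∑ z ∈ s, ∑ z' ∈ s, conj (a z * conj (K.S ↑z ↑w))
              * (a z' * conj (K.S ↑z' ↑w)) * K.k ↑z ↑z' ^ p).re
          ≤ (∑ z ∈ s, ∑ z' ∈ s, conj (a z) * a z' * K.k ↑z ↑z' ^ p).re := by
        have h := K.key_ineq (ι := {z // z ∈ s}) (fun i => ↑i) p hp w (fun i => a ↑i)
        have e1 : (∑ i : {z // z ∈ s}, ∑ j : {z // z ∈ s},
              conj (a ↑i * conj (K.S ↑(↑i : Ball d) ↑w)) * (a ↑j * conj (K.S ↑(↑j : Ball d) ↑w))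
              * K.k ↑(↑i : Ball d) ↑(↑j : Ball d) ^ p)
            = ∑ z ∈ s, ∑ z' ∈ s, conj (a z * conj (K.S ↑z ↑w))
              * (a z' * conj (K.S ↑z' ↑w)) * K.k ↑z ↑z' ^ p := by
          rw [← Finset.sum_attach s (fun z => ∑ z' ∈ s, conj (a z * conj (K.S ↑z ↑w))
            * (a z' * conj (K.S ↑z' ↑w)) * K.k ↑z ↑z' ^ p)]
          apply Finset.sum_congr rfl
          intro i _
          rw [← Finset.sum_attach s (fun z' => conj (a ↑i * conj (K.S ↑(↑i : Ball d) ↑w))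
            * (a z' * conj (K.S ↑z' ↑w)) * K.k ↑(↑i : Ball d) ↑z' ^ p)]
          rfl
        have e2 : (∑ i : {z // z ∈ s}, ∑ j : {z // z ∈ s},
              conj (a ↑i) * a ↑j * K.k ↑(↑i : Ball d) ↑(↑j : Ball d) ^ p)
            = ∑ z ∈ s, ∑ z' ∈ s, conj (a z) * a z' * K.k ↑z ↑z' ^ p := by
          rw [← Finset.sum_attach s (fun z => ∑ z' ∈ s, conj (a z) * a z' * K.k ↑z ↑z' ^ p)]
          apply Finset.sum_congr rfl
          intro i _
          rw [← Finset.sum_attach s (fun z' => conj (a ↑i) * a z' * K.k ↑(↑i : Ball d) ↑z' ^ p)]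
          rfl
        rw [e1, e2] at h
        exact h
      have h1 : (‖∑ z ∈ s, (a z * conj (K.S ↑z ↑w)) • kf z‖ : ℝ) ^ 2
          ≤ (‖∑ z ∈ s, a z • kf z‖ : ℝ) ^ 2 := by
        rw [hqA, hqB]; exact hkey
      nlinarith [norm_nonneg (∑ z ∈ s, (a z * conj (K.S ↑z ↑w)) • kf z),
        norm_nonneg (∑ z ∈ s, a z • kf z)]
    -- the two linear maps from finitely supported families
    set π : ((Ball d) →₀ ℂ) →ₗ[ℂ] H := Finsupp.linearCombination ℂ kf with hπ
    set A₀ : ((Ball d) →₀ ℂ) →ₗ[ℂ] H :=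
      Finsupp.linearCombination ℂ (fun z => conj (K.S ↑z ↑w) • kf z) with hA₀
    have hA : ∀ c : (Ball d) →₀ ℂ, ‖A₀ c‖ ≤ ‖π c‖ := by
      intro c
      have h1 : π c = ∑ z ∈ c.support, c z • kf z := by
        rw [hπ, Finsupp.linearCombination_apply, Finsupp.sum]
      have h2 : A₀ c = ∑ z ∈ c.support, (c z * conj (K.S ↑z ↑w)) • kf z := by
        rw [hA₀, Finsupp.linearCombination_apply, Finsupp.sum]
        apply Finset.sum_congr rfl
        intro z _
        rw [smul_smul]
      rw [h1, h2]
      exact hbound c.support c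
    -- the linear functional
    set l : ((Ball d) →₀ ℂ) →ₗ[ℂ] ℂ := ((innerSL ℂ f).toLinearMap).comp A₀ with hl
    have hl_apply : ∀ c, l c = (inner ℂ f (A₀ c) : ℂ) := fun c => rfl
    have hl_bound : ∀ c, ‖l c‖ ≤ ‖f‖ * ‖π c‖ := by
      intro c
      rw [hl_apply]
      calc ‖(inner ℂ f (A₀ c) : ℂ)‖ ≤ ‖f‖ * ‖A₀ c‖ := norm_inner_le_norm _ _
      _ ≤ ‖f‖ * ‖π c‖ := mul_le_mul_of_nonneg_left (hA c) (norm_nonneg f)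
    have hker : LinearMap.ker π ≤ LinearMap.ker l := by
      intro c hc
      rw [LinearMap.mem_ker] at hc ⊢
      have := hl_bound c
      rw [hc, norm_zero, mul_zero] at this
      exact norm_le_zero_iff.mp this
    set l' : (LinearMap.range π) →ₗ[ℂ] ℂ :=
      ((LinearMap.ker π).liftQ l hker).comp (π.quotKerEquivRange).symm.toLinearMap with hl'
    have hl'c : ∀ c : (Ball d) →₀ ℂ,
        l' ⟨π c, LinearMap.mem_range_self π c⟩ = l c := by
      intro c
      have h1 : π.quotKerEquivRange (Submodule.Quotient.mk c)
          = ⟨π c, LinearMap.mem_range_self π c⟩ := by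
        apply Subtype.ext
        exact LinearMap.quotKerEquivRange_apply_mk π c
      rw [hl', LinearMap.comp_apply, LinearEquiv.coe_toLinearMap, ← h1,
        LinearEquiv.symm_apply_apply, Submodule.liftQ_apply]
    have hl'bound : ∀ v : (LinearMap.range π), ‖l' v‖ ≤ ‖f‖ * ‖v‖ := by
      intro v
      obtain ⟨c, hc⟩ := v.2
      have hv : v = ⟨π c, LinearMap.mem_range_self π c⟩ := Subtype.ext hc.symm
      rw [hv, hl'c]
      have : ‖(⟨π c, LinearMap.mem_range_self π c⟩ : LinearMap.range π)‖ = ‖π c‖ := rfl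
      rw [this]
      exact hl_bound c
    set L' : (LinearMap.range π) →L[ℂ] ℂ := LinearMap.mkContinuous l' ‖f‖ hl'bound with hL'
    have hdense : DenseRange ((LinearMap.range π).subtypeL) := by
      have hbot : (LinearMap.range π)ᗮ = ⊥ := by
        rw [Submodule.eq_bot_iff]
        intro u hu
        apply hJ
        rw [map_zero]
        funext z
        have hz : kf z ∈ LinearMap.range π := by
          rw [hπ, Finsupp.range_linearCombination]
          exact Submodule.subset_span (Set.mem_range_self z)
        have := (Submodule.mem_orthogonal _ u).mp hu (kf z) hz
        rw [hrep u z]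
        simpa using this
      have hclosure : (LinearMap.range π).topologicalClosure = ⊤ := by
        rw [← Submodule.orthogonal_orthogonal_eq_closure, hbot,
          Submodule.bot_orthogonal_eq_top]
      have hd : Dense ((LinearMap.range π : Submodule ℂ H) : Set H) :=
        Submodule.dense_iff_topologicalClosure_eq_top.mpr hclosure
      have heq : Set.range ((LinearMap.range π).subtypeL)
          = ((LinearMap.range π : Submodule ℂ H) : Set H) := by
        rw [Submodule.coe_subtypeL']
        exact Subtype.range_coe
      have hres : Dense (Set.range ((LinearMap.range π).subtypeL)) := heq ▸ hd
      exact hres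
    have h_e : IsUniformInducing ((LinearMap.range π).subtypeL) := by
      have hiso : Isometry ((LinearMap.range π).subtypeL) := by
        have : ⇑((LinearMap.range π).subtypeL) = ((↑) : (LinearMap.range π) → H) := by
          rw [Submodule.coe_subtypeL']
          rfl
        rw [this]
        exact isometry_subtype_coe
      exact hiso.isUniformInducing
    set L : H →L[ℂ] ℂ := L'.extend ((LinearMap.range π).subtypeL) with hLdef
    set g : H := (InnerProductSpace.toDual ℂ H).symm L with hgdef
    refine ⟨g, ?_⟩
    funext z
    have hc0 : π (Finsupp.single z 1) = kf z := by
      rw [hπ, Finsupp.linearCombination_single, one_smul]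
    have hmem : kf z ∈ LinearMap.range π := ⟨Finsupp.single z 1, hc0⟩
    have h2 : L (kf z) = L' ⟨kf z, hmem⟩ := by
      have h1 : (kf z) = ((LinearMap.range π).subtypeL) ⟨kf z, hmem⟩ := rfl
      rw [hLdef]
      conv_lhs => rw [h1]
      exact ContinuousLinearMap.extend_eq _ hdense h_e _
    have h4 : L' ⟨kf z, hmem⟩ = l (Finsupp.single z 1) := by
      have h3 : (⟨kf z, hmem⟩ : LinearMap.range π)
          = ⟨π (Finsupp.single z 1), LinearMap.mem_range_self _ _⟩ :=
        Subtype.ext hc0.symm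
      have h5 : L' ⟨kf z, hmem⟩ = l' ⟨kf z, hmem⟩ := rfl
      rw [h5, h3]
      exact hl'c _
    have h6 : A₀ (Finsupp.single z 1) = conj (K.S ↑z ↑w) • kf z := by
      rw [hA₀, Finsupp.linearCombination_single, one_smul]
    have h7 : l (Finsupp.single z 1) = conj (K.S ↑z ↑w) * (inner ℂ f (kf z) : ℂ) := by
      rw [hl_apply, h6, inner_smul_right]
    have h8 : (inner ℂ g (kf z) : ℂ) = L (kf z) := by
      rw [hgdef]
      exact InnerProductSpace.toDual_symm_apply
    show J g z = K.S ↑z ↑w * J f z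
    rw [hrep g z, ← inner_conj_symm (kf z) g, h8, h2, h4, h7, map_mul,
      Complex.conj_conj, inner_conj_symm, ← hrep f z]
  refine ⟨?_, part2⟩
  intro f
  obtain ⟨g, hg⟩ := part2 f
  refine ⟨f - g, ?_⟩
  funext z
  rw [map_sub]
  have : (K.k ↑z ↑w)⁻¹ = 1 - K.S ↑z ↑w := by
    rw [CNPData.k, inv_inv]
  rw [this]
  have hgz := congrFun hg z
  simp only [Pi.sub_apply, hgz]
  ring
end
end

section
/- Let d and p be positive integers, let b : ℤ₊^d∖{0} → ℝ_{≥0} satisfy b_γ = 1 whenever |γ| = 1, and let μ : ℤ₊^d → ℂ satisfy μ(0) = 1. Suppose that for every nonzero α ∈ ℤ₊^d, Σ_{r=1}^{|α|} C(r+p−1, p−1) Σ_{(γ₁,…,γ_r)} (∏_{i=1}^r b_{γ_i}) (∏_{i=1}^r μ(γ_i)) = ( Σ_{r=1}^{|α|} C(r+p−1, p−1) Σ_{(γ₁,…,γ_r)} ∏_{i=1}^r b_{γ_i} ) · μ(α), where the inner sums run over ordered r-tuples of nonzero multi-indices (γ₁,…,γ_r) with γ₁+⋯+γ_r = α and C(·,·)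 denotes the binomial coefficient. Then μ(α) = ∏_{j=1}^d μ(e_j)^{α_j} for every α ∈ ℤ₊^d, where e_j is the j-th standard unit multi-index. -/
open scoped BigOperators Classical

noncomputable section

/-- The (finite) set of ordered `r`-tuples `(γ₁, …, γ_r)` of *nonzero* multi-indices in
`ℤ₊^d` with `γ₁ + ⋯ + γ_r = α`. -/
def comps (d r : ℕ) (α : Fin d → ℕ) : Finset (Fin r → (Fin d → ℕ)) :=
  (Fintype.piFinset fun _ : Fin r => Finset.Iic α).filter
    fun γ => (∑ i, γ i) = α ∧ ∀ i, γ i ≠ 0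

lemma mem_comps {d r : ℕ} {α : Fin d → ℕ} {γ : Fin r → (Fin d → ℕ)} :
    γ ∈ comps d r α ↔ (∑ i, γ i) = α ∧ ∀ i, γ i ≠ 0 := by
  constructor
  · intro hg
    simp only [comps, Finset.mem_filter] at hg
    exact hg.2
  · rintro ⟨h1, h2⟩
    simp only [comps, Finset.mem_filter, Fintype.mem_piFinset, Finset.mem_Iic]
    refine ⟨fun i => ?_, h1, h2⟩
    exact h1 ▸ Finset.single_le_sum (fun k _ => zero_le) (Finset.mem_univ i)

lemma exists_unit_comp (d : ℕ) : ∀ (n : ℕ) (α : Fin d → ℕ), (∑ j, α j) = n →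
    ∃ γ ∈ comps d n α, ∀ i, (∑ j, γ i j) = 1 := by
  intro n
  induction n with
  | zero =>
    intro α hα
    have hα0 : α = 0 := funext fun j =>
      Finset.sum_eq_zero_iff.mp hα j (Finset.mem_univ j)
    refine ⟨Fin.elim0, ?_, fun i => i.elim0⟩
    rw [mem_comps]
    exact ⟨by simp [hα0], fun i => i.elim0⟩
  | succ n ih =>
    intro α hα
    have hj' : ∃ j, α j ≠ 0 := by
      by_contra hc
      push_neg at hc
      simp [hc] at hα
    obtain ⟨j, hj⟩ := hj'
    set α' := Function.update α j (α j - 1) with hα'def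
    have hsum' : (∑ k, α' k) = n := by
      rw [hα'def, Finset.sum_update_of_mem (Finset.mem_univ j),
        Finset.sdiff_singleton_eq_erase]
      have h2 : α j + ∑ k ∈ Finset.univ.erase j, α k = ∑ k, α k :=
        Finset.add_sum_erase _ α (Finset.mem_univ j)
      omega
    have hrec : α' + Pi.single j 1 = α := by
      funext k
      simp only [Pi.add_apply, hα'def, Function.update_apply, Pi.single_apply]
      by_cases hk : k = j
      · subst hk; simp; omega
      · simp [hk]
    have hle : ∀ k, α' k ≤ α k := by
      intro k
      simp only [hα'def, Function.update_apply]
      by_cases hk : k = j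
      · subst hk; simp
      · simp [hk]
    obtain ⟨γ', hγ'mem, hγ'unit⟩ := ih α' hsum'
    rw [mem_comps] at hγ'mem
    have hunit : ∀ i : Fin (n + 1),
        (∑ k, (Fin.snoc γ' (Pi.single j 1) : Fin (n+1) → (Fin d → ℕ)) i k) = 1 := by
      intro i
      refine Fin.lastCases ?_ ?_ i
      · simp [Fin.snoc_last, Pi.single_apply]
      · intro i'
        simp only [Fin.snoc_castSucc]
        exact hγ'unit i'
    refine ⟨Fin.snoc γ' (Pi.single j 1), ?_, hunit⟩
    rw [mem_comps]
    constructor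
    · rw [Fin.sum_univ_castSucc]
      simp only [Fin.snoc_castSucc, Fin.snoc_last]
      rw [hγ'mem.1, hrec]
    · intro i hzero
      have := hunit i
      rw [hzero] at this
      simp at this

/-- the key combinatorial claim for powers of CNP kernels.  If `μ : ℤ₊^d → ℂ`
with `μ(0) = 1` satisfies, for every nonzero multi-index `α`,
`Σ_{r=1}^{|α|} C(r+p-1,p-1) Σ_{γ₁+⋯+γ_r = α, γ_i ≠ 0} (Π b_{γ_i})(Π μ(γ_i))
  = (Σ_{r=1}^{|α|} C(r+p-1,p-1) Σ_{γ₁+⋯+γ_r = α, γ_i ≠ 0} Π b_{γ_i}) · μ(α)`,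
where `b ≥ 0` and `b_γ = 1` for `|γ| = 1`, then `μ(α) = Π_j μ(e_j)^{α_j}` for all `α`. -/
theorem stmt3 (d p : ℕ) (hd : 0 < d) (hp : 0 < p)
    (b : (Fin d → ℕ) → ℝ) (hb0 : ∀ γ, 0 ≤ b γ) (hb1 : ∀ γ, (∑ j, γ j) = 1 → b γ = 1)
    (μ : (Fin d → ℕ) → ℂ) (hμ0 : μ 0 = 1)
    (h : ∀ α : Fin d → ℕ, α ≠ 0 →
      (∑ r ∈ Finset.Icc 1 (∑ j, α j), (Nat.choose (r + p - 1) (p - 1) : ℂ) *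
          ∑ γ ∈ comps d r α, (∏ i, (b (γ i) : ℂ)) * ∏ i, μ (γ i))
        = (∑ r ∈ Finset.Icc 1 (∑ j, α j), (Nat.choose (r + p - 1) (p - 1) : ℂ) *
          ∑ γ ∈ comps d r α, ∏ i, (b (γ i) : ℂ)) * μ α) :
    ∀ α : Fin d → ℕ, μ α = ∏ j, μ (Pi.single j 1) ^ α j := by
  suffices H : ∀ n (α : Fin d → ℕ), (∑ j, α j) = n → μ α = ∏ j, μ (Pi.single j 1) ^ α j by
    exact fun α => H _ α rfl
  intro n
  induction n using Nat.strong_induction_on with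
  | _ n IH =>
  intro α hα
  match n, hα with
  | 0, hα =>
    have hα0 : α = 0 := funext fun j =>
      Finset.sum_eq_zero_iff.mp hα j (Finset.mem_univ j)
    subst hα0
    simp [hμ0]
  | 1, hα =>
    have hj' : ∃ j, α j ≠ 0 := by
      by_contra hc
      push_neg at hc
      simp [hc] at hα
    obtain ⟨j0, hj0⟩ := hj'
    have hle : α j0 ≤ 1 := hα ▸ Finset.single_le_sum (fun k _ => Nat.zero_le _) (Finset.mem_univ j0)
    have hj1 : α j0 = 1 := by omega
    have hother : ∀ k, k ≠ j0 → α k = 0 := by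
      intro k hk
      have h2 : α j0 + ∑ i ∈ Finset.univ.erase j0, α i = ∑ i, α i :=
        Finset.add_sum_erase _ α (Finset.mem_univ j0)
      have h3 : ∑ i ∈ Finset.univ.erase j0, α i = 0 := by omega
      exact Finset.sum_eq_zero_iff.mp h3 k (Finset.mem_erase.mpr ⟨hk, Finset.mem_univ k⟩)
    have hαeq : α = Pi.single j0 1 := by
      funext k
      by_cases hk : k = j0
      · subst hk; simp [hj1]
      · simp [Pi.single_apply, hk, hother k hk]
    subst hαeq
    rw [Finset.prod_eq_single j0]
    · simp
    · intro k _ hk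
      simp [Pi.single_apply, hk]
    · simp
  | (m + 2), hα =>
    set n := m + 2 with hn
    have hn2 : 2 ≤ n := by omega
    have hαne : α ≠ 0 := by
      intro hc
      subst hc
      simp at hα
    set M : ℂ := ∏ j, μ (Pi.single j 1) ^ α j with hM
    -- key: for r ≥ 2, every composition has all parts of size < n, so IH applies
    have keyA : ∀ r ∈ Finset.Icc 2 n, ∀ γ ∈ comps d r α, (∏ i, μ (γ i)) = M := by
      intro r hr γ hγ
      rw [Finset.mem_Icc] at hr
      rw [mem_comps] at hγ
      have hsz : (∑ i, ∑ k, γ i k) = n := by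
        rw [← hα, ← Finset.sum_comm]
        rw [show (∑ k, ∑ i, γ i k) = ∑ k, (∑ i, γ i) k by
          apply Finset.sum_congr rfl; intro k _; rw [Finset.sum_apply]]
        rw [hγ.1]
      have hpos : ∀ i, 1 ≤ ∑ k, γ i k := by
        intro i
        by_contra hc
        push_neg at hc
        interval_cases hs : (∑ k, γ i k)
        exact hγ.2 i (funext fun k => Finset.sum_eq_zero_iff.mp hs k (Finset.mem_univ k))
      have hlt : ∀ i, (∑ k, γ i k) < n := by
        intro i
        have hex : ∃ i' : Fin r, i' ≠ i := by
          have : 1 < Fintype.card (Fin r) := by simp; omega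
          obtain ⟨i', hi'⟩ := Fintype.exists_ne_of_one_lt_card this i
          exact ⟨i', hi'⟩
        obtain ⟨i', hi'⟩ := hex
        have h2 : (∑ k, γ i k) + ∑ i'' ∈ Finset.univ.erase i, (∑ k, γ i'' k)
            = ∑ i'', ∑ k, γ i'' k :=
          Finset.add_sum_erase Finset.univ (fun i'' => ∑ k, γ i'' k) (Finset.mem_univ i)
        have h3 : (1 : ℕ) ≤ ∑ i'' ∈ Finset.univ.erase i, (∑ k, γ i'' k) :=
          le_trans (hpos i') (Finset.single_le_sum (f := fun i'' => ∑ k, γ i'' k)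
            (fun k _ => Nat.zero_le _) (Finset.mem_erase.mpr ⟨hi', Finset.mem_univ i'⟩))
        omega
      have hμγ : ∀ i, μ (γ i) = ∏ j, μ (Pi.single j 1) ^ (γ i j) := by
        intro i
        exact IH _ (by rw [hn] at hlt ⊢; exact hlt i) (γ i) rfl
      calc (∏ i, μ (γ i)) = ∏ i, ∏ j, μ (Pi.single j 1) ^ (γ i j) := by
            exact Finset.prod_congr rfl fun i _ => hμγ i
        _ = ∏ j, ∏ i, μ (Pi.single j 1) ^ (γ i j) := Finset.prod_comm
        _ = ∏ j, μ (Pi.single j 1) ^ (∑ i, γ i j) := by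
            exact Finset.prod_congr rfl fun j _ => Finset.prod_pow_eq_pow_sum _ _ _
        _ = M := by
            rw [hM]
            apply Finset.prod_congr rfl
            intro j _
            congr 1
            rw [show (∑ i, γ i j) = (∑ i, γ i) j from (Finset.sum_apply _ _ _).symm, hγ.1]
    -- comps d 1 α is a singleton
    have hcomp1 : comps d 1 α = {fun _ => α} := by
      ext γ
      rw [mem_comps, Finset.mem_singleton]
      constructor
      · rintro ⟨h1, _⟩
        funext i
        have : i = 0 := Subsingleton.elim i 0
        subst this
        simpa using h1
      · rintro rfl
        exact ⟨by simp, fun i => hαne⟩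
    have hIcc : Finset.Icc 1 n = insert 1 (Finset.Icc 2 n) := by
      ext r
      simp [Finset.mem_Icc, Finset.mem_insert]
      omega
    have h' := h α hαne
    rw [hα] at h'
    rw [hIcc, Finset.sum_insert (by simp), Finset.sum_insert (by simp)] at h'
    rw [hcomp1] at h'
    simp only [Finset.sum_singleton] at h'
    have hsum2 : ∀ r ∈ Finset.Icc 2 n,
        (Nat.choose (r + p - 1) (p - 1) : ℂ) *
          ∑ γ ∈ comps d r α, (∏ i, (b (γ i) : ℂ)) * ∏ i, μ (γ i)
        = ((Nat.choose (r + p - 1) (p - 1) : ℂ) *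
          ∑ γ ∈ comps d r α, ∏ i, (b (γ i) : ℂ)) * M := by
      intro r hr
      rw [mul_assoc, Finset.sum_mul]
      congr 1
      apply Finset.sum_congr rfl
      intro γ hγ
      rw [keyA r hr γ hγ]
    rw [Finset.sum_congr rfl hsum2] at h'
    set T : ℂ := ∑ r ∈ Finset.Icc 2 n, (Nat.choose (r + p - 1) (p - 1) : ℂ) *
      ∑ γ ∈ comps d r α, ∏ i, (b (γ i) : ℂ) with hT
    rw [← Finset.sum_mul] at h'
    rw [← hT] at h'
    -- h' : c1 * (∏b(α) * μ α) + T * M = (c1 * ∏b(α) + T) * μ α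
    simp only [Fin.prod_univ_one] at h'
    have hTM : T * M = T * μ α := by
      linear_combination h'
    -- now show T ≠ 0
    have hTreal : T = ((∑ r ∈ Finset.Icc 2 n, (Nat.choose (r + p - 1) (p - 1) : ℝ) *
        ∑ γ ∈ comps d r α, ∏ i, b (γ i) : ℝ) : ℂ) := by
      rw [hT]
      push_cast
      rfl
    have hTRpos : 0 < ∑ r ∈ Finset.Icc 2 n, (Nat.choose (r + p - 1) (p - 1) : ℝ) *
        ∑ γ ∈ comps d r α, ∏ i, b (γ i) := by
      apply Finset.sum_pos'
      · intro r _
        apply mul_nonneg (Nat.cast_nonneg _)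
        apply Finset.sum_nonneg
        intro γ _
        exact Finset.prod_nonneg fun i _ => hb0 _
      · refine ⟨n, Finset.mem_Icc.mpr ⟨hn2, le_refl n⟩, ?_⟩
        apply mul_pos
        · have : 0 < Nat.choose (n + p - 1) (p - 1) := Nat.choose_pos (by omega)
          exact_mod_cast this
        · obtain ⟨γ, hγmem, hγunit⟩ := exists_unit_comp d n α hα
          apply Finset.sum_pos'
          · intro γ' _
            exact Finset.prod_nonneg fun i _ => hb0 _
          · refine ⟨γ, hγmem, ?_⟩
            have : (∏ i, b (γ i)) = 1 :=
              Finset.prod_eq_one fun i _ => hb1 _ (hγunit i)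
            rw [this]
            norm_num
    have hTne : T ≠ 0 := by
      rw [hTreal]
      exact_mod_cast ne_of_gt hTRpos
    have := mul_left_cancel₀ hTne hTM
    rw [← this, hM]
end
end

section
/- Let k¹ and k² be normalized CNP kernels on 𝔹_d and let k = k¹k² be their Schur (pointwise) product, a positive semidefinite kernel on 𝔹_d. For every w ∈ 𝔹_d, the four functions z ↦ k¹(z,w), z ↦ k²(z,w), z ↦ k¹(z,w)^{-1} and z ↦ k²(z,w)^{-1} all belong to H(k); moreover, for each w the function z ↦ k¹(z,w)^{-1} is a multiplier of H(k) (i.e., its pointwise product with any f ∈ H(k) lies in H(k)), and similarly for z ↦ k²(z,w)^{-1}. -/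
open scoped BigOperators ComplexConjugate

noncomputable section

namespace Stmt4Aux

open Complex

local notation "⟪" x ", " y "⟫" => @inner ℂ _ _ x y

variable {d : ℕ}

abbrev L2 (d : ℕ) := lp (fun _ : (Fin d → ℕ) => ℂ) 2

/-- the ℓ² realization vector of a CNP kernel at a point of the ball -/
def vec (K : CNPData d) (z : Ball d) : L2 d :=
  ⟨fun α => (Real.sqrt (K.b α) : ℂ) * mono (↑z) α, by
    apply memℓp_gen
    have h2 : ((2 : ENNReal)).toReal = (2 : ℝ) := by norm_num
    have key : ∀ α, ‖(Real.sqrt (K.b α) : ℂ) * mono (↑z) α‖ ^ ((2 : ENNReal)).toReal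
        = K.b α * ‖mono (↑z) α‖ ^ 2 := by
      intro α
      rw [h2, show ((2:ℝ)) = ((2:ℕ):ℝ) by norm_num, Real.rpow_natCast]
      rw [norm_mul, mul_pow, Complex.norm_real, Real.norm_eq_abs,
        _root_.abs_of_nonneg (Real.sqrt_nonneg _), Real.sq_sqrt (K.b_nonneg α)]
    simpa only [key] using K.summable_diag (↑z) z.2⟩

lemma vec_apply (K : CNPData d) (z : Ball d) (α : Fin d → ℕ) :
    (vec K z : ∀ _ : Fin d → ℕ, ℂ) α = (Real.sqrt (K.b α) : ℂ) * mono (↑z) α := rfl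

lemma summable_term (K : CNPData d) (z u : Ball d) :
    Summable fun α : Fin d → ℕ => (K.b α : ℂ) * mono (↑z) α * conj (mono (↑u) α) := by
  have h := lp.summable_inner (𝕜 := ℂ) (vec K u) (vec K z)
  have : ∀ α : Fin d → ℕ, ⟪(vec K u : ∀ _, ℂ) α, (vec K z : ∀ _, ℂ) α⟫
      = (K.b α : ℂ) * mono (↑z) α * conj (mono (↑u) α) := by
    intro α
    simp only [vec_apply, RCLike.inner_apply, map_mul, Complex.conj_ofReal]
    have hb : ((Real.sqrt (K.b α)) : ℂ) * ((Real.sqrt (K.b α)) : ℂ) = (K.b α : ℂ) := by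
      rw [← Complex.ofReal_mul, Real.mul_self_sqrt (K.b_nonneg α)]
    linear_combination (conj (mono (↑u) α) * mono (↑z) α) * hb
  simpa only [this] using h

lemma inner_vec (K : CNPData d) (z u : Ball d) :
    ⟪vec K u, vec K z⟫ = K.S (↑z) (↑u) := by
  rw [lp.inner_eq_tsum, CNPData.S]
  congr 1
  funext α
  simp only [vec_apply, RCLike.inner_apply, map_mul, Complex.conj_ofReal]
  have hb : ((Real.sqrt (K.b α)) : ℂ) * ((Real.sqrt (K.b α)) : ℂ) = (K.b α : ℂ) := by
    rw [← Complex.ofReal_mul, Real.mul_self_sqrt (K.b_nonneg α)]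
  linear_combination (conj (mono (↑u) α) * mono (↑z) α) * hb

lemma norm_vec_sq (K : CNPData d) (z : Ball d) :
    (‖vec K z‖ : ℝ) ^ 2 = ∑' α : Fin d → ℕ, K.b α * ‖mono (↑z) α‖ ^ 2 := by
  have h2 : (0:ℝ) < ((2 : ENNReal)).toReal := by norm_num
  have := lp.norm_rpow_eq_tsum h2 (vec K z)
  have h2' : ((2 : ENNReal)).toReal = ((2:ℕ):ℝ) := by norm_num
  rw [h2'] at this
  rw [Real.rpow_natCast] at this
  have key : ∀ α, ‖(vec K z : ∀ _, ℂ) α‖ ^ ((2:ℕ):ℝ) = K.b α * ‖mono (↑z) α‖ ^ 2 := by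
    intro α
    rw [Real.rpow_natCast, vec_apply, norm_mul, mul_pow, Complex.norm_real, Real.norm_eq_abs,
      _root_.abs_of_nonneg (Real.sqrt_nonneg _), Real.sq_sqrt (K.b_nonneg α)]
  rw [this]
  exact tsum_congr key

lemma norm_vec_lt_one (K : CNPData d) (z : Ball d) : ‖vec K z‖ < 1 := by
  have h := K.sum_lt_one (↑z) z.2
  rw [← norm_vec_sq K z] at h
  nlinarith [norm_nonneg (vec K z)]

lemma norm_S_lt_one (K : CNPData d) (z u : Ball d) : ‖K.S (↑z) (↑u)‖ < 1 := by
  rw [← inner_vec]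
  calc ‖⟪vec K u, vec K z⟫‖ ≤ ‖vec K u‖ * ‖vec K z‖ := norm_inner_le_norm _ _
  _ < 1 := by
      have h1 := norm_vec_lt_one K u
      have h2 := norm_vec_lt_one K z
      nlinarith [norm_nonneg (vec K u), norm_nonneg (vec K z)]

lemma one_sub_S_ne_zero (K : CNPData d) (z u : Ball d) : 1 - K.S (↑z) (↑u) ≠ 0 := by
  intro h
  have h1 : K.S (↑z) (↑u) = 1 := by linear_combination -h
  have h2 := norm_S_lt_one K z u
  rw [h1] at h2; simp at h2

lemma k_ne_zero (K : CNPData d) (z u : Ball d) : K.k (↑z) (↑u) ≠ 0 :=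
  inv_ne_zero (one_sub_S_ne_zero K z u)

lemma k_inv (K : CNPData d) (z u : Ball d) : (K.k (↑z) (↑u))⁻¹ = 1 - K.S (↑z) (↑u) := by
  rw [CNPData.k, inv_inv]

lemma zero_mem_Ball : (0 : EuclideanSpace ℂ (Fin d)) ∈ Ball d := by
  simp [Ball]

lemma mono_zero_eq (α : Fin d → ℕ) :
    mono (0 : EuclideanSpace ℂ (Fin d)) α = if α = 0 then 1 else 0 := by
  by_cases h : α = 0
  · simp [h, mono]
  · have : ∃ j, α j ≠ 0 := by
      by_contra hc
      push_neg at hc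
      exact h (funext fun j => hc j)
    obtain ⟨j, hj⟩ := this
    simp only [h, if_false, mono]
    apply Finset.prod_eq_zero (Finset.mem_univ j)
    simp [zero_pow hj]

lemma S_zero (K : CNPData d) (z : EuclideanSpace ℂ (Fin d)) : K.S z 0 = 0 := by
  rw [CNPData.S]
  convert tsum_zero with α
  rw [mono_zero_eq]
  by_cases h : α = 0
  · simp [h, K.b_zero]
  · simp [h]

lemma k_zero (K : CNPData d) (z : EuclideanSpace ℂ (Fin d)) : K.k z 0 = 1 := by
  rw [CNPData.k, S_zero]; simp


/-! ### Positive semidefiniteness of CNP kernels -/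

lemma summable_entry (K : CNPData d) (u v : Ball d) :
    Summable fun γ : Fin d → ℕ => conj ((vec K v : ∀ _, ℂ) γ) * (vec K u : ∀ _, ℂ) γ := by
  have h := lp.summable_inner (𝕜 := ℂ) (vec K v) (vec K u)
  simpa [RCLike.inner_apply, mul_comm] using h

lemma S_eq_tsum (K : CNPData d) (u v : Ball d) :
    K.S (↑u) (↑v) = ∑' γ : Fin d → ℕ, conj ((vec K v : ∀ _, ℂ) γ) * (vec K u : ∀ _, ℂ) γ := by
  rw [← inner_vec K u v, lp.inner_eq_tsum]
  exact tsum_congr fun γ => by simp [RCLike.inner_apply, mul_comm]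

lemma psd_pow (K : CNPData d) (n : ℕ) :
    ∀ (T : Finset (Ball d)) (c : Ball d → ℂ),
    0 ≤ (∑ u ∈ T, ∑ v ∈ T, conj (c u) * c v * (K.S ↑u ↑v) ^ n).re ∧
      (∑ u ∈ T, ∑ v ∈ T, conj (c u) * c v * (K.S ↑u ↑v) ^ n).im = 0 := by
  induction n with
  | zero =>
    intro T c
    have h : (∑ u ∈ T, ∑ v ∈ T, conj (c u) * c v * (K.S ↑u ↑v) ^ 0)
        = (∑ v ∈ T, c v) * conj (∑ u ∈ T, c u) := by
      rw [map_sum, Finset.sum_mul_sum, Finset.sum_comm]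
      exact Finset.sum_congr rfl fun u _ => Finset.sum_congr rfl fun v _ => by
        rw [pow_zero, mul_one]; ring
    rw [h, Complex.mul_conj]
    exact ⟨by simp [Complex.normSq_nonneg], by simp⟩
  | succ n ih =>
    intro T c
    set f : (Fin d → ℕ) → Ball d → Ball d → ℂ := fun γ u v =>
      (conj (c u) * c v * (K.S ↑u ↑v) ^ n) *
        (conj ((vec K v : ∀ _, ℂ) γ) * (vec K u : ∀ _, ℂ) γ) with hf
    have hsumf : ∀ u v : Ball d, Summable fun γ => f γ u v := fun u v =>
      (summable_entry K u v).mul_left _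
    have hsum_inner : ∀ u : Ball d, Summable fun γ => ∑ v ∈ T, f γ u v := fun u =>
      summable_sum fun v _ => hsumf u v
    have hsum_outer : Summable fun γ => ∑ u ∈ T, ∑ v ∈ T, f γ u v :=
      summable_sum fun u _ => hsum_inner u
    have key : (∑ u ∈ T, ∑ v ∈ T, conj (c u) * c v * (K.S ↑u ↑v) ^ (n + 1))
        = ∑' γ, ∑ u ∈ T, ∑ v ∈ T, f γ u v := by
      rw [Summable.tsum_finsetSum fun u _ => hsum_inner u]
      refine Finset.sum_congr rfl fun u _ => ?_
      rw [Summable.tsum_finsetSum fun v _ => hsumf u v]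
      refine Finset.sum_congr rfl fun v _ => ?_
      rw [hf]
      simp only
      rw [tsum_mul_left, ← S_eq_tsum K u v]
      ring
    have hγ : ∀ γ : Fin d → ℕ, (∑ u ∈ T, ∑ v ∈ T, f γ u v)
        = ∑ u ∈ T, ∑ v ∈ T, conj ((fun x => c x * conj ((vec K x : ∀ _, ℂ) γ)) u) *
            (fun x => c x * conj ((vec K x : ∀ _, ℂ) γ)) v * (K.S ↑u ↑v) ^ n := by
      intro γ
      refine Finset.sum_congr rfl fun u _ => Finset.sum_congr rfl fun v _ => ?_
      simp only [hf, map_mul, Complex.conj_conj]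
      ring
    constructor
    · rw [key, Complex.re_tsum hsum_outer]
      refine tsum_nonneg fun γ => ?_
      rw [hγ γ]
      exact (ih T _).1
    · rw [key, Complex.im_tsum hsum_outer]
      have : ∀ γ : Fin d → ℕ, (∑ u ∈ T, ∑ v ∈ T, f γ u v).im = 0 := fun γ => by
        rw [hγ γ]; exact (ih T _).2
      simp only [this, tsum_zero]

lemma psd_k (K : CNPData d) (T : Finset (Ball d)) (c : Ball d → ℂ) :
    0 ≤ (∑ u ∈ T, ∑ v ∈ T, conj (c u) * c v * K.k ↑u ↑v).re := by
  have hsumf : ∀ u v : Ball d, Summable fun m : ℕ =>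
      conj (c u) * c v * (K.S ↑u ↑v) ^ m := fun u v =>
    (summable_geometric_of_norm_lt_one (norm_S_lt_one K u v)).mul_left _
  have hsum_inner : ∀ u : Ball d, Summable fun m : ℕ =>
      ∑ v ∈ T, conj (c u) * c v * (K.S ↑u ↑v) ^ m := fun u =>
    summable_sum fun v _ => hsumf u v
  have hsum_outer : Summable fun m : ℕ =>
      ∑ u ∈ T, ∑ v ∈ T, conj (c u) * c v * (K.S ↑u ↑v) ^ m :=
    summable_sum fun u _ => hsum_inner u
  have key : (∑ u ∈ T, ∑ v ∈ T, conj (c u) * c v * K.k ↑u ↑v)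
      = ∑' m : ℕ, ∑ u ∈ T, ∑ v ∈ T, conj (c u) * c v * (K.S ↑u ↑v) ^ m := by
    rw [Summable.tsum_finsetSum fun u _ => hsum_inner u]
    refine Finset.sum_congr rfl fun u _ => ?_
    rw [Summable.tsum_finsetSum fun v _ => hsumf u v]
    refine Finset.sum_congr rfl fun v _ => ?_
    rw [tsum_mul_left, tsum_geometric_of_norm_lt_one (norm_S_lt_one K u v), CNPData.k]
  rw [key, Complex.re_tsum hsum_outer]
  exact tsum_nonneg fun m => (psd_pow K m T c).1


/-! ### The key multiplier bound -/

lemma bound (K1 K2 : CNPData d) {H : Type} [NormedAddCommGroup H] [InnerProductSpace ℂ H]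
    (kf : Ball d → H)
    (gram : ∀ u v : Ball d, (inner ℂ (kf u) (kf v) : ℂ) = K1.k ↑u ↑v * K2.k ↑u ↑v)
    (w : Ball d) (T : Finset (Ball d)) (c : Ball d → ℂ) :
    ‖∑ u ∈ T, (c u * conj (K1.S ↑u ↑w)) • kf u‖ ≤ ‖∑ u ∈ T, c u • kf u‖ := by
  classical
  set a : (Fin d → ℕ) → ℂ := fun γ => (vec K1 w : ∀ _, ℂ) γ with ha
  set h : (Fin d → ℕ) → H := fun γ =>
    ∑ u ∈ T, (c u * conj ((vec K1 u : ∀ _, ℂ) γ)) • kf u with hh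
  set Φ : H := ∑ u ∈ T, c u • kf u with hΦ
  have expand : ∀ p : Ball d → ℂ, (inner ℂ (∑ u ∈ T, p u • kf u) (∑ v ∈ T, p v • kf v) : ℂ)
      = ∑ u ∈ T, ∑ v ∈ T, conj (p u) * p v * (K1.k ↑u ↑v * K2.k ↑u ↑v) := by
    intro p
    rw [sum_inner]
    refine Finset.sum_congr rfl fun u _ => ?_
    rw [inner_sum]
    refine Finset.sum_congr rfl fun v _ => ?_
    rw [inner_smul_left, inner_smul_right, gram]
    ring
  have hsum_uw : ∀ u : Ball d, Summable fun γ : Fin d → ℕ =>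
      conj ((vec K1 u : ∀ _, ℂ) γ) * (vec K1 w : ∀ _, ℂ) γ := by
    intro u
    simpa [RCLike.inner_apply, mul_comm] using lp.summable_inner (𝕜 := ℂ) (vec K1 u) (vec K1 w)
  have hconjS : ∀ u : Ball d, conj (K1.S ↑u ↑w)
      = ∑' γ : Fin d → ℕ, conj ((vec K1 u : ∀ _, ℂ) γ) * (vec K1 w : ∀ _, ℂ) γ := by
    intro u
    rw [← inner_vec K1 u w, inner_conj_symm, lp.inner_eq_tsum]
    exact tsum_congr fun γ => by simp [RCLike.inner_apply, mul_comm]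
  have step1 : (∑ u ∈ T, (c u * conj (K1.S ↑u ↑w)) • kf u) = ∑' γ, a γ • h γ := by
    have huγ : ∀ u ∈ T, (c u * conj (K1.S ↑u ↑w)) • kf u
        = ∑' γ, (c u * (conj ((vec K1 u : ∀ _, ℂ) γ) * (vec K1 w : ∀ _, ℂ) γ)) • kf u := by
      intro u _
      rw [hconjS u, ← tsum_mul_left, Summable.tsum_smul_const ((hsum_uw u).mul_left (c u)) (kf u)]
    rw [Finset.sum_congr rfl huγ,
      ← Summable.tsum_finsetSum (fun u _ => ((hsum_uw u).mul_left (c u)).smul_const (kf u))]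
    refine tsum_congr fun γ => ?_
    rw [hh]
    simp only
    rw [Finset.smul_sum]
    refine Finset.sum_congr rfl fun u _ => ?_
    rw [smul_smul, ha]
    congr 1
    ring
  have hnorm_a : ∀ γ, ‖a γ‖ ^ 2 = K1.b γ * ‖mono (↑w) γ‖ ^ 2 := by
    intro γ
    rw [ha]
    simp only [vec_apply]
    rw [norm_mul, mul_pow, Complex.norm_real, Real.norm_eq_abs,
      _root_.abs_of_nonneg (Real.sqrt_nonneg _), Real.sq_sqrt (K1.b_nonneg γ)]
  have hsa : Summable fun γ => ‖a γ‖ ^ 2 := by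
    simpa only [hnorm_a] using K1.summable_diag (↑w) w.2
  have hsa1 : (∑' γ : Fin d → ℕ, ‖a γ‖ ^ 2) ≤ 1 := by
    rw [tsum_congr hnorm_a]
    exact le_of_lt (K1.sum_lt_one (↑w) w.2)
  have hQ : ∀ γ : Fin d → ℕ, ((‖h γ‖ : ℂ) ^ 2)
      = ∑ u ∈ T, ∑ v ∈ T, (conj (c u) * c v * (K1.k ↑u ↑v * K2.k ↑u ↑v)) *
          ((vec K1 u : ∀ _, ℂ) γ * conj ((vec K1 v : ∀ _, ℂ) γ)) := by
    intro γ
    have hn : ((‖h γ‖ : ℂ) ^ 2) = (inner ℂ (h γ) (h γ) : ℂ) :=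
      (inner_self_eq_norm_sq_to_K (𝕜 := ℂ) (h γ)).symm
    rw [hn, hh]
    rw [expand (fun u => c u * conj ((vec K1 u : ∀ _, ℂ) γ))]
    refine Finset.sum_congr rfl fun u _ => Finset.sum_congr rfl fun v _ => ?_
    simp only [map_mul, Complex.conj_conj]
    ring
  have hsumQγ : ∀ u v : Ball d, Summable fun γ : Fin d → ℕ =>
      (conj (c u) * c v * (K1.k ↑u ↑v * K2.k ↑u ↑v)) *
        ((vec K1 u : ∀ _, ℂ) γ * conj ((vec K1 v : ∀ _, ℂ) γ)) := by
    intro u v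
    apply Summable.mul_left
    exact (summable_entry K1 u v).congr fun γ => by ring
  have hsumQ : Summable fun γ : Fin d → ℕ => ((‖h γ‖ : ℂ) ^ 2) := by
    apply Summable.congr _ (fun γ => (hQ γ).symm)
    exact summable_sum fun u _ => summable_sum fun v _ => hsumQγ u v
  have hsh : Summable fun γ => ‖h γ‖ ^ 2 := by
    have h2 := Complex.hasSum_re hsumQ.hasSum
    refine h2.summable.congr fun γ => ?_
    rw [← Complex.ofReal_pow, Complex.ofReal_re]
  have hS_entry : ∀ u v : Ball d,
      (∑' γ : Fin d → ℕ, (vec K1 u : ∀ _, ℂ) γ * conj ((vec K1 v : ∀ _, ℂ) γ))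
        = K1.S ↑u ↑v := by
    intro u v
    rw [S_eq_tsum K1 u v]
    exact tsum_congr fun γ => by ring
  have hval : (∑' γ, ((‖h γ‖ : ℂ) ^ 2))
      = ∑ u ∈ T, ∑ v ∈ T, conj (c u) * c v * (K1.k ↑u ↑v * K2.k ↑u ↑v)
        - ∑ u ∈ T, ∑ v ∈ T, conj (c u) * c v * K2.k ↑u ↑v := by
    rw [tsum_congr hQ, Summable.tsum_finsetSum (fun u _ => summable_sum fun v _ => hsumQγ u v)]
    rw [← Finset.sum_sub_distrib]
    refine Finset.sum_congr rfl fun u _ => ?_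
    rw [Summable.tsum_finsetSum (fun v _ => hsumQγ u v), ← Finset.sum_sub_distrib]
    refine Finset.sum_congr rfl fun v _ => ?_
    rw [tsum_mul_left, hS_entry u v]
    have h1 : (1 - K1.S ↑u ↑v) * K1.k ↑u ↑v = 1 := by
      rw [CNPData.k]
      exact mul_inv_cancel₀ (one_sub_S_ne_zero K1 u v)
    linear_combination (-(conj (c u) * c v * K2.k ↑u ↑v)) * h1
  have hsh_le : (∑' γ, ‖h γ‖ ^ 2) ≤ ‖Φ‖ ^ 2 := by
    have hc : ((∑' γ, ‖h γ‖ ^ 2 : ℝ) : ℂ) = ∑' γ, ((‖h γ‖ : ℂ) ^ 2) := by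
      rw [Complex.ofReal_tsum]
      push_cast
      rfl
    have hre : (∑' γ, ‖h γ‖ ^ 2)
        = (∑ u ∈ T, ∑ v ∈ T, conj (c u) * c v * (K1.k ↑u ↑v * K2.k ↑u ↑v)).re
          - (∑ u ∈ T, ∑ v ∈ T, conj (c u) * c v * K2.k ↑u ↑v).re := by
      have := congrArg Complex.re (hc.trans hval)
      simpa using this
    have hX : (∑ u ∈ T, ∑ v ∈ T, conj (c u) * c v * (K1.k ↑u ↑v * K2.k ↑u ↑v)).re
        = ‖Φ‖ ^ 2 := by
      rw [← expand c, ← hΦ]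
      rw [← inner_self_eq_norm_sq (𝕜 := ℂ)]
      rfl
    have hY := psd_k K2 T c
    rw [hre, hX]
    linarith
  -- Cauchy–Schwarz over the tsum
  have hab_sum : Summable fun γ => ‖a γ‖ * ‖h γ‖ := by
    refine Summable.of_nonneg_of_le (fun γ => mul_nonneg (norm_nonneg _) (norm_nonneg _))
      (fun γ => ?_) ((hsa.add hsh).div_const 2)
    nlinarith [sq_nonneg (‖a γ‖ - ‖h γ‖)]
  have hsa0 : (0:ℝ) ≤ ∑' γ, ‖a γ‖ ^ 2 := tsum_nonneg fun γ => sq_nonneg _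
  have hsh0 : (0:ℝ) ≤ ∑' γ, ‖h γ‖ ^ 2 := tsum_nonneg fun γ => sq_nonneg _
  have cs : (∑' γ, ‖a γ‖ * ‖h γ‖)
      ≤ Real.sqrt (∑' γ, ‖a γ‖ ^ 2) * Real.sqrt (∑' γ, ‖h γ‖ ^ 2) := by
    refine Summable.tsum_le_of_sum_le hab_sum fun s => ?_
    have h1 : (∑ γ ∈ s, ‖a γ‖ * ‖h γ‖) ^ 2
        ≤ (∑ γ ∈ s, ‖a γ‖ ^ 2) * (∑ γ ∈ s, ‖h γ‖ ^ 2) :=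
      Finset.sum_mul_sq_le_sq_mul_sq s _ _
    have h2 : (∑ γ ∈ s, ‖a γ‖ ^ 2) ≤ ∑' γ, ‖a γ‖ ^ 2 :=
      Summable.sum_le_tsum s (fun _ _ => sq_nonneg _) hsa
    have h3 : (∑ γ ∈ s, ‖h γ‖ ^ 2) ≤ ∑' γ, ‖h γ‖ ^ 2 :=
      Summable.sum_le_tsum s (fun _ _ => sq_nonneg _) hsh
    have h4 : (∑ γ ∈ s, ‖a γ‖ * ‖h γ‖) ^ 2 ≤ (∑' γ, ‖a γ‖ ^ 2) * (∑' γ, ‖h γ‖ ^ 2) := by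
      calc (∑ γ ∈ s, ‖a γ‖ * ‖h γ‖) ^ 2 ≤ (∑ γ ∈ s, ‖a γ‖ ^ 2) * (∑ γ ∈ s, ‖h γ‖ ^ 2) := h1
        _ ≤ (∑' γ, ‖a γ‖ ^ 2) * (∑' γ, ‖h γ‖ ^ 2) := by
            apply mul_le_mul h2 h3 (Finset.sum_nonneg fun _ _ => sq_nonneg _) hsa0
    calc (∑ γ ∈ s, ‖a γ‖ * ‖h γ‖)
        ≤ Real.sqrt ((∑' γ, ‖a γ‖ ^ 2) * (∑' γ, ‖h γ‖ ^ 2)) := by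
          rw [show (∑ γ ∈ s, ‖a γ‖ * ‖h γ‖)
              = Real.sqrt ((∑ γ ∈ s, ‖a γ‖ * ‖h γ‖) ^ 2) from
            (Real.sqrt_sq (Finset.sum_nonneg fun _ _ =>
              mul_nonneg (norm_nonneg _) (norm_nonneg _))).symm]
          exact Real.sqrt_le_sqrt h4
      _ = Real.sqrt (∑' γ, ‖a γ‖ ^ 2) * Real.sqrt (∑' γ, ‖h γ‖ ^ 2) :=
          Real.sqrt_mul hsa0 _
  have hfin1 : Real.sqrt (∑' γ, ‖a γ‖ ^ 2) ≤ 1 := by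
    rw [show (1:ℝ) = Real.sqrt 1 from (Real.sqrt_one).symm]
    exact Real.sqrt_le_sqrt hsa1
  have hfin2 : Real.sqrt (∑' γ, ‖h γ‖ ^ 2) ≤ ‖Φ‖ := by
    have := Real.sqrt_le_sqrt hsh_le
    rwa [Real.sqrt_sq (norm_nonneg Φ)] at this
  have habnorm : Summable fun γ => ‖a γ • h γ‖ := by
    refine hab_sum.congr fun γ => ?_
    rw [norm_smul]
  calc ‖∑ u ∈ T, (c u * conj (K1.S ↑u ↑w)) • kf u‖
      = ‖∑' γ, a γ • h γ‖ := by rw [step1]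
    _ ≤ ∑' γ, ‖a γ • h γ‖ := norm_tsum_le_tsum_norm habnorm
    _ = ∑' γ, ‖a γ‖ * ‖h γ‖ := tsum_congr fun γ => norm_smul _ _
    _ ≤ Real.sqrt (∑' γ, ‖a γ‖ ^ 2) * Real.sqrt (∑' γ, ‖h γ‖ ^ 2) := cs
    _ ≤ 1 * ‖Φ‖ := by
        exact mul_le_mul hfin1 hfin2 (Real.sqrt_nonneg _) (by norm_num)
    _ = ‖Φ‖ := one_mul _



/-! ### Existence of the multiplication operator -/

lemma key_mult (K1 K2 : CNPData d)
    {H : Type} [NormedAddCommGroup H] [InnerProductSpace ℂ H] [CompleteSpace H]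
    (J : H →ₗ[ℂ] (Ball d → ℂ)) (hJ : Function.Injective J)
    (kf : Ball d → H)
    (hkf : ∀ w : Ball d, J (kf w) = fun z : Ball d => K1.k ↑z ↑w * K2.k ↑z ↑w)
    (hrep : ∀ (f : H) (w : Ball d), J f w = inner ℂ (kf w) f)
    (w : Ball d) (f : H) :
    ∃ g : H, ∀ z : Ball d, (inner ℂ (kf z) g : ℂ) = (1 - K1.S ↑z ↑w) * inner ℂ (kf z) f := by
  classical
  have gram : ∀ u v : Ball d, (inner ℂ (kf u) (kf v) : ℂ) = K1.k ↑u ↑v * K2.k ↑u ↑v := by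
    intro u v
    rw [← hrep (kf v) u, hkf v]
  set Φ : ((Ball d) →₀ ℂ) →ₗ[ℂ] H := Finsupp.linearCombination ℂ kf with hΦdef
  set Ψ : ((Ball d) →₀ ℂ) →ₗ[ℂ] H :=
    Finsupp.linearCombination ℂ (fun u : Ball d => (1 - conj (K1.S ↑u ↑w)) • kf u) with hΨdef
  have hΦ : ∀ c : (Ball d) →₀ ℂ, Φ c = ∑ u ∈ c.support, c u • kf u := by
    intro c
    rw [hΦdef, Finsupp.linearCombination_apply, Finsupp.sum]
  have hΨ : ∀ c : (Ball d) →₀ ℂ, Ψ c = (∑ u ∈ c.support, c u • kf u)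
      - ∑ u ∈ c.support, (c u * conj (K1.S ↑u ↑w)) • kf u := by
    intro c
    rw [hΨdef, Finsupp.linearCombination_apply, Finsupp.sum, ← Finset.sum_sub_distrib]
    refine Finset.sum_congr rfl fun u _ => ?_
    rw [smul_smul, show c u * (1 - conj (K1.S ↑u ↑w))
      = c u - c u * conj (K1.S ↑u ↑w) by ring, sub_smul]
  have hbound : ∀ c : (Ball d) →₀ ℂ, ‖Ψ c‖ ≤ 2 * ‖Φ c‖ := by
    intro c
    rw [hΨ c, hΦ c]
    calc ‖(∑ u ∈ c.support, c u • kf u) - ∑ u ∈ c.support, (c u * conj (K1.S ↑u ↑w)) • kf u‖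
        ≤ ‖∑ u ∈ c.support, c u • kf u‖
          + ‖∑ u ∈ c.support, (c u * conj (K1.S ↑u ↑w)) • kf u‖ := norm_sub_le _ _
      _ ≤ ‖∑ u ∈ c.support, c u • kf u‖ + ‖∑ u ∈ c.support, c u • kf u‖ :=
          add_le_add le_rfl (bound K1 K2 kf gram w c.support c)
      _ = 2 * ‖∑ u ∈ c.support, c u • kf u‖ := by ring
  set ℓ : ((Ball d) →₀ ℂ) →ₗ[ℂ] ℂ := ((innerₛₗ ℂ) f).comp Ψ with hℓdef
  have hℓ : ∀ c, ℓ c = (inner ℂ f (Ψ c) : ℂ) := fun c => rfl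
  have hker : LinearMap.ker Φ ≤ LinearMap.ker ℓ := by
    intro c hc
    rw [LinearMap.mem_ker] at hc ⊢
    have h0 : ‖Ψ c‖ ≤ 0 := by
      have := hbound c
      rw [hc] at this
      simpa using this
    have hΨ0 : Ψ c = 0 := by rwa [norm_le_zero_iff] at h0
    rw [hℓ, hΨ0, inner_zero_right]
  set L : ↥(LinearMap.range Φ) →ₗ[ℂ] ℂ :=
    ((LinearMap.ker Φ).liftQ ℓ hker).comp
      (Φ.quotKerEquivRange.symm : ↥(LinearMap.range Φ) →ₗ[ℂ] _) with hLdef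
  have hLval : ∀ (c : (Ball d) →₀ ℂ) (hc : Φ c ∈ LinearMap.range Φ),
      L ⟨Φ c, hc⟩ = ℓ c := by
    intro c hc
    have he : Φ.quotKerEquivRange (Submodule.Quotient.mk c) = ⟨Φ c, hc⟩ :=
      Subtype.ext (Φ.quotKerEquivRange_apply_mk c)
    rw [hLdef]
    simp only [LinearMap.comp_apply, LinearEquiv.coe_coe]
    rw [← he, LinearEquiv.symm_apply_apply, Submodule.liftQ_apply]
  have hLbound : ∀ ξ : ↥(LinearMap.range Φ), ‖L ξ‖ ≤ (2 * ‖f‖) * ‖ξ‖ := by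
    intro ξ
    obtain ⟨c, hc⟩ := ξ.2
    have hξ : ξ = ⟨Φ c, LinearMap.mem_range_self Φ c⟩ := Subtype.ext hc.symm
    rw [hξ, hLval c _]
    calc ‖ℓ c‖ = ‖(inner ℂ f (Ψ c) : ℂ)‖ := by rw [hℓ]
      _ ≤ ‖f‖ * ‖Ψ c‖ := norm_inner_le_norm f (Ψ c)
      _ ≤ ‖f‖ * (2 * ‖Φ c‖) := mul_le_mul_of_nonneg_left (hbound c) (norm_nonneg f)
      _ = (2 * ‖f‖) * ‖Φ c‖ := by ring
  set Lc : ↥(LinearMap.range Φ) →L[ℂ] ℂ := L.mkContinuous (2 * ‖f‖) hLbound with hLc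
  have hkf_mem : ∀ z : Ball d, kf z ∈ LinearMap.range Φ := by
    intro z
    refine ⟨Finsupp.single z 1, ?_⟩
    rw [hΦdef, Finsupp.linearCombination_single, one_smul]
  have horth : (LinearMap.range Φ)ᗮ = ⊥ := by
    rw [Submodule.eq_bot_iff]
    intro x hx
    apply hJ
    rw [map_zero]
    funext z
    rw [hrep x z]
    exact (Submodule.mem_orthogonal _ x).1 hx (kf z) (hkf_mem z)
  have hdense : DenseRange ((LinearMap.range Φ).subtypeL) := by
    have htop : (LinearMap.range Φ).topologicalClosure = ⊤ :=
      Submodule.topologicalClosure_eq_top_iff.mpr horth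
    have hd : Dense ((LinearMap.range Φ : Submodule ℂ H) : Set H) := by
      rw [dense_iff_closure_eq]
      have h2 := congrArg (fun p : Submodule ℂ H => (p : Set H)) htop
      simpa [← Submodule.topologicalClosure_coe] using h2
    exact hd.denseRange_val
  have hui : IsUniformInducing ((LinearMap.range Φ).subtypeL) :=
    isUniformEmbedding_subtype_val.isUniformInducing
  set Lbar : H →L[ℂ] ℂ := Lc.extend (LinearMap.range Φ).subtypeL with hLbar
  set g : H := (InnerProductSpace.toDual ℂ H).symm Lbar with hg
  refine ⟨g, fun z => ?_⟩
  have h1 : (inner ℂ g (kf z) : ℂ) = Lbar (kf z) := by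
    rw [hg]
    exact InnerProductSpace.toDual_symm_apply
  have h2 : Lbar (kf z) = Lc ⟨kf z, hkf_mem z⟩ := by
    have h := ContinuousLinearMap.extend_eq (f := Lc) (e := (LinearMap.range Φ).subtypeL) hdense hui
      ⟨kf z, hkf_mem z⟩
    rw [hLbar]
    simpa [Submodule.subtypeL_apply] using h
  have h3 : Lc ⟨kf z, hkf_mem z⟩ = ℓ (Finsupp.single z 1) := by
    have hxi : (⟨kf z, hkf_mem z⟩ : ↥(LinearMap.range Φ))
        = ⟨Φ (Finsupp.single z 1), LinearMap.mem_range_self Φ _⟩ := by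
      apply Subtype.ext
      show kf z = Φ (Finsupp.single z 1)
      rw [hΦdef, Finsupp.linearCombination_single, one_smul]
    rw [hLc]
    show L _ = _
    rw [hxi, hLval]
  have h4 : ℓ (Finsupp.single z 1) = (1 - conj (K1.S ↑z ↑w)) * inner ℂ f (kf z) := by
    rw [hℓ, hΨdef, Finsupp.linearCombination_single, one_smul, inner_smul_right]
  have h5 : (inner ℂ g (kf z) : ℂ) = (1 - conj (K1.S ↑z ↑w)) * inner ℂ f (kf z) := by
    rw [h1, h2, h3, h4]
  have h6 := congrArg conj h5
  rwa [inner_conj_symm, map_mul, map_sub, map_one, Complex.conj_conj, inner_conj_symm] at h6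


end Stmt4Aux

/-- for the Schur product `k = k¹k²` of two normalized CNP kernels, the
functions `k¹(·,w)`, `k²(·,w)`, `k¹(·,w)⁻¹`, `k²(·,w)⁻¹` belong to `H(k)`, and the two
inverses are moreover multipliers of `H(k)`. -/
theorem stmt4 (d : ℕ) (hd : 0 < d) (K1 K2 : CNPData d)
    {H : Type} [NormedAddCommGroup H] [InnerProductSpace ℂ H] [CompleteSpace H]
    (J : H →ₗ[ℂ] (Ball d → ℂ)) (hJ : Function.Injective J)
    (kf : Ball d → H)
    (hkf : ∀ w : Ball d, J (kf w) = fun z : Ball d => K1.k ↑z ↑w * K2.k ↑z ↑w)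
    (hrep : ∀ (f : H) (w : Ball d), J f w = inner ℂ (kf w) f)
    (w : Ball d) :
    (∃ g : H, J g = fun z : Ball d => K1.k ↑z ↑w) ∧
    (∃ g : H, J g = fun z : Ball d => K2.k ↑z ↑w) ∧
    (∃ g : H, J g = fun z : Ball d => (K1.k ↑z ↑w)⁻¹) ∧
    (∃ g : H, J g = fun z : Ball d => (K2.k ↑z ↑w)⁻¹) ∧
    (∀ f : H, ∃ g : H, J g = fun z : Ball d => (K1.k ↑z ↑w)⁻¹ * J f z) ∧
    (∀ f : H, ∃ g : H, J g = fun z : Ball d => (K2.k ↑z ↑w)⁻¹ * J f z) := by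
  classical
  have hkf' : ∀ w' : Ball d, J (kf w') = fun z : Ball d => K2.k ↑z ↑w' * K1.k ↑z ↑w' := by
    intro w'
    rw [hkf w']
    funext z
    exact mul_comm _ _
  have m5 : ∀ f : H, ∃ g : H, J g = fun z : Ball d => (K1.k ↑z ↑w)⁻¹ * J f z := by
    intro f
    obtain ⟨g, hg⟩ := Stmt4Aux.key_mult K1 K2 J hJ kf hkf hrep w f
    refine ⟨g, funext fun z => ?_⟩
    rw [hrep g z, hg z, Stmt4Aux.k_inv K1 z w, hrep f z]
  have m6 : ∀ f : H, ∃ g : H, J g = fun z : Ball d => (K2.k ↑z ↑w)⁻¹ * J f z := by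
    intro f
    obtain ⟨g, hg⟩ := Stmt4Aux.key_mult K2 K1 J hJ kf hkf' hrep w f
    refine ⟨g, funext fun z => ?_⟩
    rw [hrep g z, hg z, Stmt4Aux.k_inv K2 z w, hrep f z]
  have hz0 : (0 : EuclideanSpace ℂ (Fin d)) ∈ Ball d := Stmt4Aux.zero_mem_Ball
  have hJkf0 : J (kf ⟨0, hz0⟩) = fun _ : Ball d => (1 : ℂ) := by
    rw [hkf ⟨0, hz0⟩]
    funext z
    show K1.k ↑z ↑(⟨0, hz0⟩ : Ball d) * K2.k ↑z ↑(⟨0, hz0⟩ : Ball d) = 1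
    rw [show ((⟨0, hz0⟩ : Ball d) : EuclideanSpace ℂ (Fin d)) = 0 from rfl,
      Stmt4Aux.k_zero, Stmt4Aux.k_zero, one_mul]
  have m3 : ∃ g : H, J g = fun z : Ball d => (K1.k ↑z ↑w)⁻¹ := by
    obtain ⟨g, hg⟩ := m5 (kf ⟨0, hz0⟩)
    refine ⟨g, ?_⟩
    rw [hg]
    funext z
    show (K1.k ↑z ↑w)⁻¹ * J (kf ⟨0, hz0⟩) z = (K1.k ↑z ↑w)⁻¹
    have h1 : J (kf ⟨0, hz0⟩) z = 1 := by rw [hJkf0]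
    rw [h1, mul_one]
  have m4 : ∃ g : H, J g = fun z : Ball d => (K2.k ↑z ↑w)⁻¹ := by
    obtain ⟨g, hg⟩ := m6 (kf ⟨0, hz0⟩)
    refine ⟨g, ?_⟩
    rw [hg]
    funext z
    show (K2.k ↑z ↑w)⁻¹ * J (kf ⟨0, hz0⟩) z = (K2.k ↑z ↑w)⁻¹
    have h1 : J (kf ⟨0, hz0⟩) z = 1 := by rw [hJkf0]
    rw [h1, mul_one]
  have m1 : ∃ g : H, J g = fun z : Ball d => K1.k ↑z ↑w := by
    obtain ⟨g, hg⟩ := m6 (kf w)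
    refine ⟨g, ?_⟩
    rw [hg]
    funext z
    show (K2.k ↑z ↑w)⁻¹ * J (kf w) z = K1.k ↑z ↑w
    have h1 : J (kf w) z = K1.k ↑z ↑w * K2.k ↑z ↑w := by rw [hkf w]
    rw [h1, mul_comm (K1.k ↑z ↑w), ← mul_assoc,
      inv_mul_cancel₀ (Stmt4Aux.k_ne_zero K2 z w), one_mul]
  have m2 : ∃ g : H, J g = fun z : Ball d => K2.k ↑z ↑w := by
    obtain ⟨g, hg⟩ := m5 (kf w)
    refine ⟨g, ?_⟩
    rw [hg]
    funext z
    show (K1.k ↑z ↑w)⁻¹ * J (kf w) z = K2.k ↑z ↑w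
    have h1 : J (kf w) z = K1.k ↑z ↑w * K2.k ↑z ↑w := by rw [hkf w]
    rw [h1, ← mul_assoc, inv_mul_cancel₀ (Stmt4Aux.k_ne_zero K1 z w), one_mul]
  exact ⟨m1, m2, m3, m4, m5, m6⟩
end
end

section
/- Let d ≥ 1 and let b¹, b² : ℤ₊^d∖{0} → ℝ_{≥0} satisfy b¹_γ = b²_γ = 1 whenever |γ| = 1, and let μ : ℤ₊^d → ℂ satisfy μ(0) = 1. For δ ∈ ℤ₊^d define A(δ) = Σ_{r=1}^{|δ|} Σ_{(γ₁,…,γ_r)} ∏_{i=1}^r b¹_{γ_i} and A_μ(δ) = Σ_{r=1}^{|δ|} Σ_{(γ₁,…,γ_r)} (∏_{i=1}^r b¹_{γ_i})(∏_{i=1}^r μ(γ_i)) for δ ≠ 0, where the inner sums run over ordered r-tuples of nonzero multi-indices summing to δ, and set A(0) = A_μ(0) = 1; define B(δ) and B_μ(δ) analogously from b². Suppose that for every nonzero α ∈ ℤ₊^d, Σ_{δ₁+δ₂=α} A_μ(δ₁)B_μ(δ₂) = ( Σ_{δ₁+δ₂=α} A(δ₁)B(δ₂) ) · μ(α), where the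 sums run over all pairs (δ₁,δ₂) ∈ ℤ₊^d × ℤ₊^d with δ₁+δ₂ = α. Then μ(α) = ∏_{j=1}^d μ(e_j)^{α_j} for every α ∈ ℤ₊^d, where e_j is the j-th standard unit multi-index. -/
open scoped BigOperators Classical

noncomputable section

/-- `A(δ) = Σ_{r=1}^{|δ|} Σ_{γ₁+⋯+γ_r=δ, γ_i ≠ 0} Π b_{γ_i}` for `δ ≠ 0`, and `A(0) = 1`. -/
def Afun (d : ℕ) (b : (Fin d → ℕ) → ℝ) (δ : Fin d → ℕ) : ℂ :=
  if δ = 0 then 1 else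
    ∑ r ∈ Finset.Icc 1 (∑ j, δ j), ∑ γ ∈ comps d r δ, ∏ i, (b (γ i) : ℂ)

/-- `A_μ(δ) = Σ_{r=1}^{|δ|} Σ_{γ₁+⋯+γ_r=δ, γ_i ≠ 0} (Π b_{γ_i})(Π μ(γ_i))` for `δ ≠ 0`,
and `A_μ(0) = 1`. -/
def Amu (d : ℕ) (b : (Fin d → ℕ) → ℝ) (μ : (Fin d → ℕ) → ℂ) (δ : Fin d → ℕ) : ℂ :=
  if δ = 0 then 1 else
    ∑ r ∈ Finset.Icc 1 (∑ j, δ j), ∑ γ ∈ comps d r δ,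
      (∏ i, (b (γ i) : ℂ)) * ∏ i, μ (γ i)

/-- The pairs `(δ₁, δ₂)` of multi-indices with `δ₁ + δ₂ = α`. -/
def splitPairs (d : ℕ) (α : Fin d → ℕ) : Finset ((Fin d → ℕ) × (Fin d → ℕ)) :=
  (Finset.Iic α ×ˢ Finset.Iic α).filter fun q => q.1 + q.2 = α

lemma mem_splitPairs {d : ℕ} {α : Fin d → ℕ} {q : (Fin d → ℕ) × (Fin d → ℕ)} :
    q ∈ splitPairs d α ↔ q.1 + q.2 = α := by
  constructor
  · intro hq; exact (Finset.mem_filter.1 hq).2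
  · intro hq
    refine Finset.mem_filter.2 ⟨Finset.mem_product.2 ⟨Finset.mem_Iic.2 ?_, Finset.mem_Iic.2 ?_⟩, hq⟩
    · intro j; have h2 := congrFun hq j; simp only [Pi.add_apply] at h2
      exact le_trans (Nat.le_add_right _ _) h2.le
    · intro j; have h2 := congrFun hq j; simp only [Pi.add_apply] at h2
      exact le_trans (Nat.le_add_left _ _) h2.le

lemma comps_one {d : ℕ} {α : Fin d → ℕ} (hα : α ≠ 0) :
    comps d 1 α = {fun _ => α} := by
  ext γ
  simp only [mem_comps, Finset.mem_singleton]
  constructor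
  · rintro ⟨h1, -⟩
    funext i
    have : i = 0 := Subsingleton.elim _ _
    subst this
    rw [← h1]; simp [Fin.sum_univ_one]
  · rintro rfl
    exact ⟨by simp [Fin.sum_univ_one], fun i => hα⟩

lemma sum_comps_one {d : ℕ} {α : Fin d → ℕ} (hα : α ≠ 0) {M : Type*} [AddCommMonoid M]
    (f : (Fin 1 → (Fin d → ℕ)) → M) : ∑ γ ∈ comps d 1 α, f γ = f fun _ => α := by
  rw [comps_one hα, Finset.sum_singleton]

section Nu
variable {d : ℕ} (c : Fin d → ℂ)

def nuF (c : Fin d → ℂ) (β : Fin d → ℕ) : ℂ := ∏ j, c j ^ β j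

lemma nuF_zero : nuF c 0 = 1 := by simp [nuF]

lemma nuF_add (a b : Fin d → ℕ) : nuF c (a + b) = nuF c a * nuF c b := by
  simp [nuF, Pi.add_apply, pow_add, Finset.prod_mul_distrib]

lemma nuF_sum {r : ℕ} (γ : Fin r → (Fin d → ℕ)) :
    nuF c (∑ i, γ i) = ∏ i, nuF c (γ i) := by
  unfold nuF
  rw [Finset.prod_comm]
  refine Finset.prod_congr rfl fun j _ => ?_
  rw [Finset.prod_pow_eq_pow_sum]
  congr 1
  simp [Finset.sum_apply]

lemma nuF_single (j : Fin d) : nuF c (Pi.single j 1) = c j := by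
  unfold nuF
  rw [Finset.prod_eq_single j]
  · simp
  · intro j' _ hj'; rw [Pi.single_eq_of_ne hj', pow_zero]
  · simp
end Nu

def AfunR (d : ℕ) (b : (Fin d → ℕ) → ℝ) (δ : Fin d → ℕ) : ℝ :=
  if δ = 0 then 1 else
    ∑ r ∈ Finset.Icc 1 (∑ j, δ j), ∑ γ ∈ comps d r δ, ∏ i, b (γ i)

lemma Afun_eq_coe (d : ℕ) (b : (Fin d → ℕ) → ℝ) (δ : Fin d → ℕ) :
    Afun d b δ = (AfunR d b δ : ℂ) := by
  unfold Afun AfunR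
  split_ifs with hδ
  · simp
  · push_cast; rfl

lemma AfunR_nonneg {d : ℕ} {b : (Fin d → ℕ) → ℝ} (hb : ∀ γ, 0 ≤ b γ) (δ : Fin d → ℕ) :
    0 ≤ AfunR d b δ := by
  unfold AfunR
  split_ifs with hδ
  · norm_num
  · refine Finset.sum_nonneg fun r _ => Finset.sum_nonneg fun γ _ => Finset.prod_nonneg fun i _ => hb _

/-- decomposition of `α` into unit multi-indices -/
lemma exists_units {d : ℕ} : ∀ (n : ℕ) (α : Fin d → ℕ), 1 ≤ n → (∑ j, α j) = n →
    ∃ γ ∈ comps d n α, ∀ i, (∑ j, γ i j) = 1 := by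
  intro n
  induction n with
  | zero => omega
  | succ n IH =>
    intro α _ hα
    rcases Nat.eq_zero_or_pos n with rfl | hn
    · refine ⟨fun _ => α, mem_comps.2 ⟨by simp [Fin.sum_univ_one], fun i h0 => by simp [h0] at hα⟩,
        fun i => hα⟩
    · -- pick j with α j ≥ 1
      have hj : ∃ j, 1 ≤ α j := by
        by_contra hc
        push_neg at hc
        have : (∑ j, α j) = 0 := Finset.sum_eq_zero fun j _ => by have := hc j; omega
        omega
      obtain ⟨j, hj⟩ := hj
      set α' : Fin d → ℕ := α - Pi.single j 1 with hα'
      have hsub : α' + Pi.single j 1 = α := by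
        funext j'
        simp only [hα', Pi.add_apply, Pi.sub_apply]
        rcases eq_or_ne j' j with rfl | hne
        · simp; omega
        · simp [Pi.single_eq_of_ne hne]
      have hsum' : (∑ j', α' j') = n := by
        have h1 : (∑ j', α' j') + (∑ j', Pi.single j 1 j') = n + 1 := by
          rw [← Finset.sum_add_distrib]
          simp only [← Pi.add_apply, hsub]
          omega
        have h2 : (∑ j', (Pi.single j (1:ℕ)) j') = 1 := by
          rw [Finset.sum_eq_single j] <;> simp +contextual [Pi.single_eq_of_ne]
        omega
      obtain ⟨γ', hγ', hγ'u⟩ := IH α' hn hsum'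
      obtain ⟨hγ'sum, hγ'ne⟩ := mem_comps.1 hγ'
      refine ⟨Fin.snoc γ' (Pi.single j 1), mem_comps.2 ⟨?_, ?_⟩, ?_⟩
      · rw [Fin.sum_univ_castSucc]
        simp only [Fin.snoc_castSucc, Fin.snoc_last, hγ'sum, hsub]
      · intro i
        refine Fin.lastCases ?_ (fun i' => ?_) i
        · simp only [Fin.snoc_last]
          intro hc
          have := congrFun hc j
          simp at this
        · simp only [Fin.snoc_castSucc]
          exact hγ'ne _
      · intro i
        refine Fin.lastCases ?_ (fun i' => ?_) i
        · simp only [Fin.snoc_last]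
          rw [Finset.sum_eq_single j] <;> simp +contextual [Pi.single_eq_of_ne]
        · simp only [Fin.snoc_castSucc]
          exact hγ'u i'

lemma AfunR_ge_b {d : ℕ} {b : (Fin d → ℕ) → ℝ} (hb : ∀ γ, 0 ≤ b γ) {α : Fin d → ℕ}
    (hα : α ≠ 0) : b α ≤ AfunR d b α := by
  have hn : 1 ≤ ∑ j, α j := by
    rcases Nat.eq_zero_or_pos (∑ j, α j) with h0 | h; swap; · exact h
    exact absurd (funext fun j => (Finset.sum_eq_zero_iff.1 h0) j (Finset.mem_univ j)) hα
  unfold AfunR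
  rw [if_neg hα]
  have h1 : (∑ γ ∈ comps d 1 α, ∏ i, b (γ i)) = b α := by
    rw [sum_comps_one hα]; simp
  calc b α = ∑ γ ∈ comps d 1 α, ∏ i, b (γ i) := h1.symm
    _ ≤ _ := Finset.single_le_sum
        (f := fun r => ∑ γ ∈ comps d r α, ∏ i, b (γ i))
        (fun r _ => Finset.sum_nonneg fun γ _ => Finset.prod_nonneg fun i _ => hb _)
        (Finset.mem_Icc.2 ⟨le_refl 1, hn⟩)

lemma AfunR_ge_add_one {d : ℕ} {b : (Fin d → ℕ) → ℝ} (hb : ∀ γ, 0 ≤ b γ)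
    (hbone : ∀ γ, (∑ j, γ j) = 1 → b γ = 1) {α : Fin d → ℕ}
    (h2 : 2 ≤ ∑ j, α j) : b α + 1 ≤ AfunR d b α := by
  set n := ∑ j, α j with hn
  have hα : α ≠ 0 := by
    intro h0; rw [h0] at hn; simp at hn; omega
  unfold AfunR
  rw [if_neg hα]
  set f : ℕ → ℝ := fun r => ∑ γ ∈ comps d r α, ∏ i, b (γ i) with hf
  have hfnn : ∀ r, 0 ≤ f r := fun r =>
    Finset.sum_nonneg fun γ _ => Finset.prod_nonneg fun i _ => hb _
  have hf1 : f 1 = b α := by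
    show (∑ γ ∈ comps d 1 α, ∏ i : Fin 1, b (γ i)) = b α
    rw [sum_comps_one hα]; simp
  have hfn : 1 ≤ f n := by
    obtain ⟨γ0, hγ0, hγ0u⟩ := exists_units n α (by omega) rfl
    have hprod : (∏ i, b (γ0 i)) = 1 :=
      Finset.prod_eq_one fun i _ => hbone _ (hγ0u i)
    show (1:ℝ) ≤ ∑ γ ∈ comps d n α, ∏ i : Fin n, b (γ i)
    calc (1:ℝ) = ∏ i, b (γ0 i) := hprod.symm
      _ ≤ _ := Finset.single_le_sum (f := fun γ => ∏ i : Fin n, b (γ i))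
          (fun γ _ => Finset.prod_nonneg fun i _ => hb _) hγ0
  have hsub : ({1, n} : Finset ℕ) ⊆ Finset.Icc 1 n := by
    intro x hx
    simp only [Finset.mem_insert, Finset.mem_singleton] at hx
    rcases hx with rfl | rfl <;> simp [Finset.mem_Icc] <;> omega
  calc b α + 1 ≤ f 1 + f n := by rw [hf1]; linarith
    _ = ∑ r ∈ ({1, n} : Finset ℕ), f r := (Finset.sum_pair (by omega)).symm
    _ ≤ ∑ r ∈ Finset.Icc 1 n, f r :=
        Finset.sum_le_sum_of_subset_of_nonneg hsub fun r _ _ => hfnn r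

lemma comps_le {d r : ℕ} {α : Fin d → ℕ} {γ : Fin r → (Fin d → ℕ)} (hγ : γ ∈ comps d r α)
    (i : Fin r) : γ i ≤ α :=
  Finset.mem_Iic.1 (Fintype.mem_piFinset.1 (Finset.mem_filter.1 hγ).1 i)

lemma Amu_eq_mul {d : ℕ} (b : (Fin d → ℕ) → ℝ) (μ : (Fin d → ℕ) → ℂ) (c : Fin d → ℂ)
    (δ : Fin d → ℕ) (hμν : ∀ γ, γ ≤ δ → γ ≠ 0 → μ γ = nuF c γ) :
    Amu d b μ δ = Afun d b δ * nuF c δ := by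
  unfold Amu Afun
  split_ifs with hδ
  · subst hδ; simp [nuF_zero]
  · rw [Finset.sum_mul]
    refine Finset.sum_congr rfl fun r hr => ?_
    rw [Finset.sum_mul]
    refine Finset.sum_congr rfl fun γ hγ => ?_
    obtain ⟨hγsum, hγne⟩ := mem_comps.1 hγ
    congr 1
    have heach : ∀ i, μ (γ i) = nuF c (γ i) := fun i =>
      hμν _ (comps_le hγ i) (hγne i)
    rw [Finset.prod_congr rfl fun i _ => heach i, ← nuF_sum, hγsum]

lemma Amu_top {d : ℕ} (b : (Fin d → ℕ) → ℝ) (μ : (Fin d → ℕ) → ℂ) (c : Fin d → ℂ)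
    {α : Fin d → ℕ} (hα : α ≠ 0)
    (hμν : ∀ γ, γ ≤ α → γ ≠ α → γ ≠ 0 → μ γ = nuF c γ) :
    Amu d b μ α = Afun d b α * nuF c α + (b α : ℂ) * (μ α - nuF c α) := by
  have hn : 1 ≤ ∑ j, α j := by
    rcases Nat.eq_zero_or_pos (∑ j, α j) with h0 | h; swap; · exact h
    exact absurd (funext fun j => (Finset.sum_eq_zero_iff.1 h0) j (Finset.mem_univ j)) hα
  have hmem : 1 ∈ Finset.Icc 1 (∑ j, α j) := Finset.mem_Icc.2 ⟨le_refl 1, hn⟩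
  unfold Amu Afun
  rw [if_neg hα, if_neg hα]
  rw [Finset.sum_eq_sum_sdiff_singleton_add hmem
      (fun r => ∑ γ ∈ comps d r α, (∏ i, (b (γ i):ℂ)) * ∏ i, μ (γ i)),
    Finset.sum_eq_sum_sdiff_singleton_add hmem
      (fun r => ∑ γ ∈ comps d r α, ∏ i, (b (γ i):ℂ))]
  rw [sum_comps_one hα, sum_comps_one hα]
  simp only [Fin.prod_univ_one]
  have hrest : ∀ r ∈ Finset.Icc 1 (∑ j, α j) \ {1},
      (∑ γ ∈ comps d r α, (∏ i, (b (γ i):ℂ)) * ∏ i, μ (γ i))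
        = (∑ γ ∈ comps d r α, ∏ i, (b (γ i):ℂ)) * nuF c α := by
    intro r hr
    have hr2 : 2 ≤ r := by
      have h1 := Finset.mem_sdiff.1 hr
      have h2 := Finset.mem_Icc.1 h1.1
      have h3 : r ≠ 1 := by simpa using h1.2
      omega
    rw [Finset.sum_mul]
    refine Finset.sum_congr rfl fun γ hγ => ?_
    obtain ⟨hγsum, hγne⟩ := mem_comps.1 hγ
    congr 1
    have hne_top : ∀ i, γ i ≠ α := by
      intro i hc
      have hsplit : γ i + ∑ k ∈ Finset.univ.erase i, γ k = α := by
        rw [Finset.add_sum_erase _ _ (Finset.mem_univ i)]; exact hγsum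
      rw [hc] at hsplit
      have hz : (∑ k ∈ Finset.univ.erase i, γ k) = 0 := by
        nth_rewrite 2 [← add_zero α] at hsplit
        exact add_left_cancel hsplit
      have hcard : 1 ≤ (Finset.univ.erase i).card := by
        rw [Finset.card_erase_of_mem (Finset.mem_univ i)]
        simp only [Finset.card_univ, Fintype.card_fin]
        omega
      obtain ⟨i', hi'⟩ := Finset.card_pos.1 hcard
      exact hγne i' ((Finset.sum_eq_zero_iff.1 hz) i' hi')
    have heach : ∀ i, μ (γ i) = nuF c (γ i) := fun i =>
      hμν _ (comps_le hγ i) (hne_top i) (hγne i)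
    rw [Finset.prod_congr rfl fun i _ => heach i, ← nuF_sum, hγsum]
  rw [Finset.sum_congr rfl hrest, ← Finset.sum_mul]
  ring

/-- the key combinatorial claim for Schur products of two CNP kernels.
If `μ(0) = 1` and `Σ_{δ₁+δ₂=α} A_μ(δ₁) B_μ(δ₂) = (Σ_{δ₁+δ₂=α} A(δ₁) B(δ₂)) · μ(α)` for all
nonzero `α`, where `A, A_μ` come from `b¹` and `B, B_μ` from `b²` (both `≥ 0` and `= 1` on
multi-indices of length one), then `μ(α) = Π_j μ(e_j)^{α_j}` for all `α`. -/
theorem stmt6 (d : ℕ) (hd : 0 < d)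
    (b1 b2 : (Fin d → ℕ) → ℝ)
    (hb1nn : ∀ γ, 0 ≤ b1 γ) (hb2nn : ∀ γ, 0 ≤ b2 γ)
    (hb1one : ∀ γ, (∑ j, γ j) = 1 → b1 γ = 1) (hb2one : ∀ γ, (∑ j, γ j) = 1 → b2 γ = 1)
    (μ : (Fin d → ℕ) → ℂ) (hμ0 : μ 0 = 1)
    (h : ∀ α : Fin d → ℕ, α ≠ 0 →
      (∑ q ∈ splitPairs d α, Amu d b1 μ q.1 * Amu d b2 μ q.2)
        = (∑ q ∈ splitPairs d α, Afun d b1 q.1 * Afun d b2 q.2) * μ α) :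
    ∀ α : Fin d → ℕ, μ α = ∏ j, μ (Pi.single j 1) ^ α j := by
  set c : Fin d → ℂ := fun j => μ (Pi.single j 1) with hc
  suffices H : ∀ (n : ℕ) (α : Fin d → ℕ), (∑ j, α j) = n → μ α = nuF c α by
    intro α; exact H _ α rfl
  intro n
  induction n using Nat.strong_induction_on with
  | _ n IH =>
  intro α hn
  rcases Nat.lt_or_ge n 2 with hlt | hge
  · interval_cases n
    · -- n = 0 : α = 0
      have h0 : α = 0 := funext fun j => Finset.sum_eq_zero_iff.1 hn j (Finset.mem_univ j)
      rw [h0, hμ0, nuF_zero]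
    · -- n = 1 : α = e_j
      obtain ⟨j, hj⟩ : ∃ j, α j ≠ 0 := by
        by_contra hcon; push_neg at hcon
        rw [Finset.sum_eq_zero (fun j _ => hcon j)] at hn
        omega
      have hsplit : α j + ∑ j' ∈ Finset.univ.erase j, α j' = 1 := by
        rw [Finset.add_sum_erase _ _ (Finset.mem_univ j), hn]
      have h0 : (∑ j' ∈ Finset.univ.erase j, α j') = 0 := by omega
      have hαj : α j = 1 := by omega
      have hα : α = Pi.single j 1 := by
        funext j'
        rcases eq_or_ne j' j with rfl | hne
        · simp [hαj]
        · rw [Pi.single_eq_of_ne hne]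
          exact Finset.sum_eq_zero_iff.1 h0 j' (Finset.mem_erase.2 ⟨hne, Finset.mem_univ j'⟩)
      rw [hα, nuF_single]
  · -- n ≥ 2
    have hα : α ≠ 0 := by
      intro h0; rw [h0] at hn; simp at hn; omega
    have hμlt : ∀ β : Fin d → ℕ, (∑ j, β j) < n → μ β = nuF c β := fun β hβ => IH _ hβ β rfl
    have hsum_lt : ∀ γ : Fin d → ℕ, γ ≤ α → γ ≠ α → (∑ j, γ j) < n := by
      intro γ hle hne
      rw [← hn]
      refine Finset.sum_lt_sum (fun j _ => hle j) ?_
      by_contra hcon; push_neg at hcon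
      exact hne (le_antisymm hle fun j => hcon j (Finset.mem_univ j))
    have hμν_top : ∀ γ : Fin d → ℕ, γ ≤ α → γ ≠ α → γ ≠ 0 → μ γ = nuF c γ :=
      fun γ hle hne _ => hμlt γ (hsum_lt γ hle hne)
    have key := h α hα
    set S := splitPairs d α with hS
    have hmemS1 : ((α, (0 : Fin d → ℕ))) ∈ S := mem_splitPairs.2 (by simp)
    have hmemS2 : (((0 : Fin d → ℕ), α)) ∈ S := mem_splitPairs.2 (by simp)
    have hne12 : ((α, (0 : Fin d → ℕ))) ≠ (((0 : Fin d → ℕ), α)) := by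
      intro hcon
      exact hα (congrArg Prod.fst hcon)
    have hterm : ∀ q ∈ S, Amu d b1 μ q.1 * Amu d b2 μ q.2
        = Afun d b1 q.1 * Afun d b2 q.2 * nuF c α
          + ((if q = (α, (0:Fin d → ℕ)) then (b1 α : ℂ) * (μ α - nuF c α) else 0)
          + (if q = ((0:Fin d → ℕ), α) then (b2 α : ℂ) * (μ α - nuF c α) else 0)) := by
      intro q hq
      have hq12 := mem_splitPairs.1 hq
      rcases eq_or_ne q.1 α with h1 | h1
      · have hq2 : q.2 = 0 := by
          have h' : q.1 + q.2 = q.1 := by rw [hq12, h1]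
          exact add_eq_left.mp h'
        have hq' : q = (α, (0:Fin d → ℕ)) := Prod.ext h1 hq2
        rw [hq', if_pos rfl, if_neg hne12]
        have hAmu0 : Amu d b2 μ 0 = 1 := by simp [Amu]
        have hAfun0 : Afun d b2 0 = 1 := by simp [Afun]
        show Amu d b1 μ α * Amu d b2 μ 0 = _
        rw [Amu_top b1 μ c hα hμν_top, hAmu0, hAfun0]
        ring
      · rcases eq_or_ne q.2 α with h2 | h2
        · have hq1 : q.1 = 0 := by
            have h' : q.1 + q.2 = q.2 := by rw [hq12, h2]
            exact add_eq_right.mp h'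
          have hq' : q = ((0:Fin d → ℕ), α) := Prod.ext hq1 h2
          rw [hq', if_neg (Ne.symm hne12), if_pos rfl]
          have hAmu0 : Amu d b1 μ 0 = 1 := by simp [Amu]
          have hAfun0 : Afun d b1 0 = 1 := by simp [Afun]
          show Amu d b1 μ 0 * Amu d b2 μ α = _
          rw [Amu_top b2 μ c hα hμν_top, hAmu0, hAfun0]
          ring
        · have hqne1 : q ≠ (α, (0:Fin d → ℕ)) := fun hcon => h1 (congrArg Prod.fst hcon)
          have hqne2 : q ≠ ((0:Fin d → ℕ), α) := fun hcon => h2 (congrArg Prod.snd hcon)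
          rw [if_neg hqne1, if_neg hqne2, add_zero, add_zero]
          have hle1 : q.1 ≤ α := fun j => by
            have := congrFun hq12 j; simp only [Pi.add_apply] at this
            exact le_trans (Nat.le_add_right _ _) this.le
          have hle2 : q.2 ≤ α := fun j => by
            have := congrFun hq12 j; simp only [Pi.add_apply] at this
            exact le_trans (Nat.le_add_left _ _) this.le
          have hAm : Amu d b1 μ q.1 = Afun d b1 q.1 * nuF c q.1 := by
            refine Amu_eq_mul b1 μ c q.1 fun γ hγle hγ0 => ?_
            refine hμlt γ (lt_of_le_of_lt (Finset.sum_le_sum fun j _ => hγle j)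
              (hsum_lt q.1 hle1 h1))
          have hBm : Amu d b2 μ q.2 = Afun d b2 q.2 * nuF c q.2 := by
            refine Amu_eq_mul b2 μ c q.2 fun γ hγle hγ0 => ?_
            refine hμlt γ (lt_of_le_of_lt (Finset.sum_le_sum fun j _ => hγle j)
              (hsum_lt q.2 hle2 h2))
          rw [hAm, hBm]
          have hνν : nuF c q.1 * nuF c q.2 = nuF c α := by rw [← nuF_add, hq12]
          calc Afun d b1 q.1 * nuF c q.1 * (Afun d b2 q.2 * nuF c q.2)
              = Afun d b1 q.1 * Afun d b2 q.2 * (nuF c q.1 * nuF c q.2) := by ring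
            _ = _ := by rw [hνν]
    rw [Finset.sum_congr rfl hterm, Finset.sum_add_distrib, Finset.sum_add_distrib,
      Finset.sum_ite_eq' S (α, (0:Fin d → ℕ)), Finset.sum_ite_eq' S ((0:Fin d → ℕ), α),
      if_pos hmemS1, if_pos hmemS2, ← Finset.sum_mul] at key
    set T := ∑ q ∈ S, Afun d b1 q.1 * Afun d b2 q.2 with hT
    have key2 : (T - ((b1 α : ℂ) + b2 α)) * (μ α - nuF c α) = 0 := by
      linear_combination -key
    set TR := ∑ q ∈ S, AfunR d b1 q.1 * AfunR d b2 q.2 with hTR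
    have hTcoe : T = (TR : ℂ) := by
      rw [hT, hTR]
      push_cast
      exact Finset.sum_congr rfl fun q _ => by rw [Afun_eq_coe, Afun_eq_coe]
    have hTRgt : (b1 α + b2 α : ℝ) < TR := by
      have hA0 : AfunR d b1 0 = 1 := by simp [AfunR]
      have hB0 : AfunR d b2 0 = 1 := by simp [AfunR]
      have hsub : ({(α, (0:Fin d → ℕ)), ((0:Fin d → ℕ), α)} :
          Finset ((Fin d → ℕ) × (Fin d → ℕ))) ⊆ S := by
        intro x hx
        simp only [Finset.mem_insert, Finset.mem_singleton] at hx
        rcases hx with rfl | rfl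
        · exact hmemS1
        · exact hmemS2
      have hpair : ∑ q ∈ ({(α, (0:Fin d → ℕ)), ((0:Fin d → ℕ), α)} :
          Finset ((Fin d → ℕ) × (Fin d → ℕ))), AfunR d b1 q.1 * AfunR d b2 q.2
          = AfunR d b1 α * AfunR d b2 0 + AfunR d b1 0 * AfunR d b2 α :=
        Finset.sum_pair hne12
      have hle : AfunR d b1 α * AfunR d b2 0 + AfunR d b1 0 * AfunR d b2 α ≤ TR := by
        rw [← hpair, hTR]
        refine Finset.sum_le_sum_of_subset_of_nonneg hsub fun q _ _ =>
          mul_nonneg (AfunR_nonneg hb1nn _) (AfunR_nonneg hb2nn _)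
      rw [hA0, hB0, mul_one, one_mul] at hle
      have h1 : b1 α + 1 ≤ AfunR d b1 α := AfunR_ge_add_one hb1nn hb1one (by omega)
      have h2 : b2 α ≤ AfunR d b2 α := AfunR_ge_b hb2nn hα
      linarith
    rcases mul_eq_zero.1 key2 with hz | hz
    · exfalso
      rw [hTcoe] at hz
      have : TR - (b1 α + b2 α) = 0 := by
        have := hz
        push_cast at this
        exact_mod_cast this
      linarith
    · have := sub_eq_zero.1 hz
      exact this
end
end

section
/- Let b : 𝔹_d → 𝔻 be a holomorphic, injective map with b(z₀) = 0 for some z₀ ∈ 𝔹_d, let k(z,w) = (1 − b(z)\overline{b(w)})^{-1}, and suppose there are ξ₀ ∈ ∂𝔹_d and λ ∈ 𝔻 such that b(z) → λ as z → ξ₀ within 𝔹_d. Then the function g(z) = (1 − \overline{λ} b(z))^{-1} belongs to H(k) with ‖g‖² = (1 − |λ|²)^{-1}, one has ‖k_w − g‖_{H(k)} → 0 as w → ξ₀ within 𝔹_d, and consequently for every f ∈ H(k) the limit lim_{z→ξ₀} f(z) exists and equals ⟨f, g⟩_{H(k)}. -/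
open scoped BigOperators ComplexConjugate

noncomputable section

lemma one_sub_mul_ne_zero' {a c : ℂ} (ha : ‖a‖ < 1) (hc : ‖c‖ < 1) :
    (1 : ℂ) - a * c ≠ 0 := by
  refine sub_ne_zero.mpr fun h => ?_
  have : ‖a * c‖ < 1 := by
    calc ‖a * c‖ = ‖a‖ * ‖c‖ := norm_mul a c
    _ < 1 := by nlinarith [norm_nonneg a, norm_nonneg c]
  rw [← h] at this
  simp at this

/-- let `b : 𝔹_d → 𝔻` be holomorphic, injective, vanishing at some
`z₀ ∈ 𝔹_d`, with boundary limit `b(z) → λ` as `z → ξ₀ ∈ ∂𝔹_d` within the ball, and let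
`k(z,w) = (1 - b(z) conj (b(w)))⁻¹`.  Then `g(z) = (1 - conj λ · b(z))⁻¹` belongs to `H(k)`
with `‖g‖² = (1 - |λ|²)⁻¹`, the kernel functions `k_w` converge to `g` in norm as `w → ξ₀`,
and every `f ∈ H(k)` has a limit at `ξ₀` equal to `⟨f, g⟩`. -/
theorem stmt14 (d : ℕ) (hd : 0 < d)
    (b : EuclideanSpace ℂ (Fin d) → ℂ)
    (hb_hol : DifferentiableOn ℂ b (Ball d))
    (hb_into : ∀ z ∈ Ball d, ‖b z‖ < 1)
    (hb_inj : Set.InjOn b (Ball d))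
    (z₀ : EuclideanSpace ℂ (Fin d)) (hz₀ : z₀ ∈ Ball d) (hbz₀ : b z₀ = 0)
    (ξ₀ : EuclideanSpace ℂ (Fin d)) (hξ₀ : ‖ξ₀‖ = 1)
    (lam : ℂ) (hlam : ‖lam‖ < 1)
    (hblim : Filter.Tendsto b (nhdsWithin ξ₀ (Ball d)) (nhds lam))
    {H : Type} [NormedAddCommGroup H] [InnerProductSpace ℂ H] [CompleteSpace H]
    (J : H →ₗ[ℂ] (Ball d → ℂ)) (hJ : Function.Injective J)
    (kf : Ball d → H)
    (hkf : ∀ w : Ball d, J (kf w) = fun z : Ball d => (1 - b z.1 * conj (b w.1))⁻¹)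
    (hrep : ∀ (f : H) (w : Ball d), J f w = inner ℂ (kf w) f) :
    ∃ g : H,
      (J g = fun z : Ball d => (1 - conj lam * b z.1)⁻¹) ∧
      ‖g‖ ^ 2 = ((1 : ℝ) - ‖lam‖ ^ 2)⁻¹ ∧
      Filter.Tendsto (fun w : Ball d => ‖kf w - g‖)
        (Filter.comap Subtype.val (nhdsWithin ξ₀ (Ball d))) (nhds 0) ∧
      ∀ f : H, Filter.Tendsto (fun z : Ball d => J f z)
        (Filter.comap Subtype.val (nhdsWithin ξ₀ (Ball d))) (nhds (inner ℂ g f : ℂ)) := by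
  classical
  haveI : Nonempty (Fin d) := ⟨⟨0, hd⟩⟩
  set F : Filter (Ball d) :=
    Filter.comap Subtype.val (nhdsWithin ξ₀ (Ball d)) with hFdef
  -- the filter is nontrivial
  have hmem : ξ₀ ∈ closure (Ball d) := by
    rw [Ball, closure_ball (0 : EuclideanSpace ℂ (Fin d)) one_ne_zero]
    simp [mem_closedBall_iff_norm, hξ₀]
  haveI hne : (nhdsWithin ξ₀ (Ball d)).NeBot :=
    mem_closure_iff_nhdsWithin_neBot.mp hmem
  haveI hFne : F.NeBot := by
    rw [hFdef, Filter.comap_neBot_iff]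
    intro s hs
    obtain ⟨x, hxs, hxB⟩ :=
      Filter.nonempty_of_mem (Filter.inter_mem hs self_mem_nhdsWithin)
    exact ⟨⟨x, hxB⟩, hxs⟩
  have hbT : Filter.Tendsto (fun w : Ball d => b w.1) F (nhds lam) :=
    hblim.comp Filter.tendsto_comap
  -- inner products of kernel functions
  have ip : ∀ w z : Ball d,
      (inner ℂ (kf z) (kf w) : ℂ) = (1 - b z.1 * conj (b w.1))⁻¹ := by
    intro w z
    have h1 := congrFun (hkf w) z
    rw [hrep (kf w) z] at h1
    exact h1
  have hconjlam : ‖(conj lam : ℂ)‖ < 1 := by simpa using hlam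
  have hc : (1 : ℂ) - lam * conj lam ≠ 0 := one_sub_mul_ne_zero' hlam hconjlam
  -- the net of kernel functions is Cauchy
  have h1 : Filter.Tendsto (fun p : Ball d × Ball d => b p.1.1) (F ×ˢ F) (nhds lam) :=
    hbT.comp Filter.tendsto_fst
  have h2 : Filter.Tendsto (fun p : Ball d × Ball d => b p.2.1) (F ×ˢ F) (nhds lam) :=
    hbT.comp Filter.tendsto_snd
  have key : ∀ f1 f2 : Ball d × Ball d → ℂ,
      Filter.Tendsto f1 (F ×ˢ F) (nhds lam) → Filter.Tendsto f2 (F ×ˢ F) (nhds lam) →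
      Filter.Tendsto (fun p => (1 - f1 p * conj (f2 p))⁻¹) (F ×ˢ F)
        (nhds ((1 - lam * conj lam)⁻¹)) := by
    intro f1 f2 hf1 hf2
    exact (tendsto_const_nhds.sub
      (hf1.mul ((RCLike.continuous_conj.tendsto lam).comp hf2))).inv₀ hc
  have hip2 : Filter.Tendsto
      (fun p : Ball d × Ball d => (inner ℂ (kf p.1 - kf p.2) (kf p.1 - kf p.2) : ℂ))
      (F ×ˢ F) (nhds 0) := by
    have heq : (fun p : Ball d × Ball d =>
        (inner ℂ (kf p.1 - kf p.2) (kf p.1 - kf p.2) : ℂ))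
        = fun p => (1 - b p.1.1 * conj (b p.1.1))⁻¹ - (1 - b p.2.1 * conj (b p.1.1))⁻¹
            - (1 - b p.1.1 * conj (b p.2.1))⁻¹ + (1 - b p.2.1 * conj (b p.2.1))⁻¹ := by
      funext p
      rw [inner_sub_sub_self, ip, ip, ip, ip]; ring
    rw [heq]
    have := (((key _ _ h1 h1).sub (key _ _ h2 h1)).sub (key _ _ h1 h2)).add (key _ _ h2 h2)
    simpa using this
  have hsq : Filter.Tendsto (fun p : Ball d × Ball d => ‖kf p.1 - kf p.2‖ ^ 2)
      (F ×ˢ F) (nhds 0) := by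
    have := ((RCLike.continuous_re (K := ℂ)).tendsto 0).comp hip2
    simp only [Function.comp_def] at this
    have heq : (fun p : Ball d × Ball d =>
        RCLike.re (inner ℂ (kf p.1 - kf p.2) (kf p.1 - kf p.2) : ℂ))
        = fun p => ‖kf p.1 - kf p.2‖ ^ 2 := by
      funext p
      exact inner_self_eq_norm_sq _
    rw [heq] at this
    simpa using this
  have hnorm : Filter.Tendsto (fun p : Ball d × Ball d => ‖kf p.1 - kf p.2‖)
      (F ×ˢ F) (nhds 0) := by
    have := (Real.continuous_sqrt.tendsto 0).comp hsq
    simp only [Function.comp_def, Real.sqrt_sq (norm_nonneg _)] at this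
    simpa using this
  have hcau : Cauchy (Filter.map kf F) := by
    rw [cauchy_map_iff]
    refine ⟨hFne, ?_⟩
    rw [Metric.uniformity_basis_dist.tendsto_right_iff]
    intro ε hε
    have := hnorm.eventually (gt_mem_nhds hε)
    simpa [dist_eq_norm] using this
  obtain ⟨g, hg⟩ := CompleteSpace.complete hcau
  have hkg : Filter.Tendsto kf F (nhds g) := hg
  -- identify J g
  have hJg : ∀ z : Ball d, J g z = (1 - conj lam * b z.1)⁻¹ := by
    intro z
    have hzb : ‖b z.1‖ < 1 := hb_into z.1 z.2
    have hnez : (1 : ℂ) - b z.1 * conj lam ≠ 0 := one_sub_mul_ne_zero' hzb hconjlam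
    have t1 : Filter.Tendsto (fun w : Ball d => (inner ℂ (kf z) (kf w) : ℂ)) F
        (nhds (inner ℂ (kf z) g)) := Filter.Tendsto.inner tendsto_const_nhds hkg
    have t2 : Filter.Tendsto (fun w : Ball d => (inner ℂ (kf z) (kf w) : ℂ)) F
        (nhds ((1 - b z.1 * conj lam)⁻¹)) := by
      simp only [ip]
      exact (tendsto_const_nhds.sub
        (tendsto_const_nhds.mul ((RCLike.continuous_conj.tendsto lam).comp hbT))).inv₀ hnez
    have huniq := tendsto_nhds_unique t1 t2
    rw [hrep g z, huniq, mul_comm]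
  -- the inner product of g with itself
  have hgg : (inner ℂ g g : ℂ) = (1 - conj lam * lam)⁻¹ := by
    have t1 : Filter.Tendsto (fun w : Ball d => (inner ℂ (kf w) g : ℂ)) F
        (nhds (inner ℂ g g)) := Filter.Tendsto.inner hkg tendsto_const_nhds
    have t2 : Filter.Tendsto (fun w : Ball d => (inner ℂ (kf w) g : ℂ)) F
        (nhds ((1 - conj lam * lam)⁻¹)) := by
      have heq : (fun w : Ball d => (inner ℂ (kf w) g : ℂ))
          = fun w => (1 - conj lam * b w.1)⁻¹ := by
        funext w
        rw [← hrep g w, hJg w]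
      rw [heq]
      have hnez : (1 : ℂ) - conj lam * lam ≠ 0 := by
        rw [mul_comm]; exact hc
      exact (tendsto_const_nhds.sub (tendsto_const_nhds.mul hbT)).inv₀ hnez
    exact tendsto_nhds_unique t1 t2
  refine ⟨g, funext hJg, ?_, ?_, ?_⟩
  · have : ‖g‖ ^ 2 = RCLike.re (inner ℂ g g : ℂ) := (inner_self_eq_norm_sq g).symm
    rw [this, hgg]
    have : conj lam * lam = ((‖lam‖ ^ 2 : ℝ) : ℂ) := by
      rw [mul_comm, Complex.mul_conj]
      norm_cast
      rw [Complex.normSq_eq_norm_sq]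
    rw [this]
    rw [show (1 : ℂ) - ((‖lam‖ ^ 2 : ℝ) : ℂ) = (((1 - ‖lam‖ ^ 2 : ℝ)) : ℂ) by push_cast; ring]
    rw [← Complex.ofReal_inv]
    exact RCLike.ofReal_re _
  · have := (tendsto_iff_norm_sub_tendsto_zero).mp hkg
    exact this
  · intro f
    have t : Filter.Tendsto (fun z : Ball d => (inner ℂ (kf z) f : ℂ)) F
        (nhds (inner ℂ g f)) := Filter.Tendsto.inner hkg tendsto_const_nhds
    have heq : (fun z : Ball d => J f z) = fun z : Ball d => (inner ℂ (kf z) f : ℂ) := by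
      funext z; exact hrep f z
    rw [heq]
    exact t
end
end

section
/- Let b : 𝔹_d → 𝔻 be a holomorphic, injective map with b(z₀) = 0 for some z₀ ∈ 𝔹_d, let k(z,w) = (1 − b(z)\overline{b(w)})^{-1}, and suppose there are ξ₀ ∈ ∂𝔹_d and λ ∈ 𝔻 such that b(z) → λ as z → ξ₀ within 𝔹_d. Then Λ(f) := lim_{z→ξ₀} f(z) defines a bounded linear functional on H(k) with Λ(1) = 1 which is multiplicative (Λ(fg) = Λ(f)Λ(g) whenever f, g and fg all belong to H(k)); moreover, for every w ∈ 𝔹_d the function 1/k_w(z) = 1 − b(z)\overline{b(w)} belongs to H(k) and Λ(1/k_w) · Λ(k_w) = 1. -/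
open scoped BigOperators ComplexConjugate

open Filter Topology

noncomputable section

/-- A linear functional `Λ` on an RKHS (realized by a Hilbert space `H` with point-evaluation
map `J` into functions on `X`) is multiplicative if `Λ(fg) = Λ(f)Λ(g)` whenever `f`, `g` and
their pointwise product `fg` all belong to the space. -/
def IsMultiplicative {X H : Type} [NormedAddCommGroup H] [InnerProductSpace ℂ H]
    (J : H →ₗ[ℂ] (X → ℂ)) (Λ : H →L[ℂ] ℂ) : Prop :=
  ∀ f g h : H, J h = J f * J g → Λ h = Λ f * Λ g

private lemma one_sub_mul_ne_zero'_s15 {x y : ℂ} (hx : ‖x‖ < 1) (hy : ‖y‖ ≤ 1) :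
    (1 : ℂ) - x * y ≠ 0 := by
  intro h
  have h1 : (1 : ℂ) = x * y := sub_eq_zero.mp h
  have h2 : ‖x‖ * ‖y‖ = 1 := by rw [← norm_mul, ← h1]; simp
  nlinarith [norm_nonneg x, norm_nonneg y]

private lemma neBot_comap' {X Y : Type*} {m : X → Y} {F : Filter Y} [F.NeBot] {s : Set Y}
    (hs : s ∈ F) (h : ∀ y ∈ s, ∃ x, m x = y) : (Filter.comap m F).NeBot := by
  refine Filter.comap_neBot fun t ht => ?_
  obtain ⟨y, hyt, hys⟩ := Filter.nonempty_of_mem (Filter.inter_mem ht hs)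
  obtain ⟨x, hx⟩ := h y hys
  exact ⟨x, hx ▸ hyt⟩

private lemma exists_tendsto_of_inner_tendsto' {α : Type*} {H : Type}
    [NormedAddCommGroup H] [InnerProductSpace ℂ H] [CompleteSpace H]
    {φ : α → H} {L : Filter α} [L.NeBot] {c : ℂ} (hcc : conj c = c)
    (hc : Filter.Tendsto (fun p : α × α => (inner ℂ (φ p.1) (φ p.2) : ℂ)) (L ×ˢ L) (𝓝 c)) :
    ∃ K : H, Filter.Tendsto φ L (𝓝 K) := by
  have h11 : Tendsto (fun p : α × α => (inner ℂ (φ p.1) (φ p.1) : ℂ)) (L ×ˢ L) (𝓝 c) :=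
    hc.comp (tendsto_fst.prodMk tendsto_fst)
  have h22 : Tendsto (fun p : α × α => (inner ℂ (φ p.2) (φ p.2) : ℂ)) (L ×ˢ L) (𝓝 c) :=
    hc.comp (tendsto_snd.prodMk tendsto_snd)
  have h21 : Tendsto (fun p : α × α => (inner ℂ (φ p.2) (φ p.1) : ℂ)) (L ×ˢ L) (𝓝 c) := by
    have hstar : Tendsto (fun p : α × α => conj (inner ℂ (φ p.1) (φ p.2) : ℂ)) (L ×ˢ L)
        (𝓝 (conj c)) := (Complex.continuous_conj.tendsto c).comp hc
    rw [hcc] at hstar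
    exact hstar.congr fun p => inner_conj_symm (φ p.2) (φ p.1)
  have hdiff : Tendsto (fun p : α × α => (inner ℂ (φ p.1 - φ p.2) (φ p.1 - φ p.2) : ℂ))
      (L ×ˢ L) (𝓝 0) := by
    have h := (h11.sub hc).sub (h21.sub h22)
    have heq : (fun p : α × α => (inner ℂ (φ p.1 - φ p.2) (φ p.1 - φ p.2) : ℂ))
        = fun p : α × α => ((inner ℂ (φ p.1) (φ p.1) : ℂ) - inner ℂ (φ p.1) (φ p.2))
            - ((inner ℂ (φ p.2) (φ p.1) : ℂ) - inner ℂ (φ p.2) (φ p.2)) := by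
      funext p
      simp only [inner_sub_left, inner_sub_right]
      ring
    rw [heq]
    simpa using h
  have hre : Tendsto (fun p : α × α =>
      Complex.re (inner ℂ (φ p.1 - φ p.2) (φ p.1 - φ p.2) : ℂ)) (L ×ˢ L) (𝓝 0) := by
    simpa [Function.comp_def] using (Complex.continuous_re.tendsto 0).comp hdiff
  have hdist : Tendsto (fun p : α × α => dist (φ p.1) (φ p.2)) (L ×ˢ L) (𝓝 0) := by
    have h := (Real.continuous_sqrt.tendsto 0).comp hre
    simp only [Function.comp_def, Real.sqrt_zero] at h
    refine h.congr fun p => ?_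
    rw [dist_eq_norm, norm_eq_sqrt_re_inner (𝕜 := ℂ)]; rfl
  have hcauchy : Cauchy (Filter.map φ L) := by
    rw [cauchy_map_iff]
    refine ⟨inferInstance, ?_⟩
    rw [Metric.uniformity_basis_dist.tendsto_right_iff]
    intro ε hε
    filter_upwards [hdist (Iio_mem_nhds hε)] with p hp using hp
  obtain ⟨K, hK⟩ := CompleteSpace.complete hcauchy
  exact ⟨K, hK⟩

/-- let `b : 𝔹_d → 𝔻` be holomorphic, injective, vanishing at some
`z₀ ∈ 𝔹_d`, with boundary limit `b(z) → λ ∈ 𝔻` as `z → ξ₀ ∈ ∂𝔹_d` within the ball, and let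
`k(z,w) = (1 - b(z) conj (b(w)))⁻¹`.  Then `Λ(f) = lim_{z → ξ₀} f(z)` defines a bounded
linear functional on `H(k)` with `Λ(1) = 1` which is multiplicative; moreover, for every
`w ∈ 𝔹_d` the function `1/k_w(z) = 1 - b(z) conj (b(w))` belongs to `H(k)` and
`Λ(1/k_w) · Λ(k_w) = 1`. -/
theorem stmt15 (d : ℕ) (hd : 0 < d)
    (b : EuclideanSpace ℂ (Fin d) → ℂ)
    (hb_hol : DifferentiableOn ℂ b (Ball d))
    (hb_into : ∀ z ∈ Ball d, ‖b z‖ < 1)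
    (hb_inj : Set.InjOn b (Ball d))
    (z₀ : EuclideanSpace ℂ (Fin d)) (hz₀ : z₀ ∈ Ball d) (hbz₀ : b z₀ = 0)
    (ξ₀ : EuclideanSpace ℂ (Fin d)) (hξ₀ : ‖ξ₀‖ = 1)
    (lam : ℂ) (hlam : ‖lam‖ < 1)
    (hblim : Filter.Tendsto b (nhdsWithin ξ₀ (Ball d)) (nhds lam))
    {H : Type} [NormedAddCommGroup H] [InnerProductSpace ℂ H] [CompleteSpace H]
    (J : H →ₗ[ℂ] (Ball d → ℂ)) (hJ : Function.Injective J)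
    (kf : Ball d → H)
    (hkf : ∀ w : Ball d, J (kf w) = fun z : Ball d => (1 - b z.1 * conj (b w.1))⁻¹)
    (hrep : ∀ (f : H) (w : Ball d), J f w = inner ℂ (kf w) f) :
    ∃ Λ : H →L[ℂ] ℂ,
      (∀ f : H, Filter.Tendsto (fun z : Ball d => J f z)
        (Filter.comap Subtype.val (nhdsWithin ξ₀ (Ball d))) (nhds (Λ f))) ∧
      (∀ one : H, (J one = fun _ : Ball d => 1) → Λ one = 1) ∧
      IsMultiplicative J Λ ∧
      (∀ w : Ball d, ∃ g : H,
        (J g = fun z : Ball d => 1 - b z.1 * conj (b w.1)) ∧ Λ g * Λ (kf w) = 1) := by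
  classical
  have hball_open : IsOpen (Ball d) := Metric.isOpen_ball
  set e : Ball d := ⟨z₀, hz₀⟩ with he
  have kk : ∀ x y : Ball d, (inner ℂ (kf x) (kf y) : ℂ) = (1 - b x.1 * conj (b y.1))⁻¹ := by
    intro x y
    rw [← hrep (kf y) x, hkf y]
  -- the boundary filter
  haveI hFne : (nhdsWithin ξ₀ (Ball d)).NeBot := by
    rw [← mem_closure_iff_nhdsWithin_neBot]
    have hcl : closure (Ball d) = Metric.closedBall 0 1 := closure_ball 0 one_ne_zero
    rw [hcl]
    simpa [Metric.mem_closedBall, dist_zero_right] using hξ₀.le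
  set L : Filter (Ball d) := Filter.comap Subtype.val (nhdsWithin ξ₀ (Ball d)) with hLdef
  haveI hLne : L.NeBot := neBot_comap' self_mem_nhdsWithin (fun y hy => ⟨⟨y, hy⟩, rfl⟩)
  have hbL : Tendsto (fun z : Ball d => b z.1) L (𝓝 lam) := hblim.comp tendsto_comap
  have hlamne : (1 : ℂ) - lam * conj lam ≠ 0 :=
    one_sub_mul_ne_zero'_s15 hlam (by rw [RCLike.norm_conj]; exact hlam.le)
  have hinnerL : Tendsto (fun p : Ball d × Ball d => (inner ℂ (kf p.1) (kf p.2) : ℂ)) (L ×ˢ L)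
      (𝓝 ((1 - lam * conj lam)⁻¹)) := by
    have h1 : Tendsto (fun p : Ball d × Ball d => b p.1.1) (L ×ˢ L) (𝓝 lam) :=
      hbL.comp tendsto_fst
    have h2 : Tendsto (fun p : Ball d × Ball d => conj (b p.2.1)) (L ×ˢ L) (𝓝 (conj lam)) :=
      (Complex.continuous_conj.tendsto lam).comp (hbL.comp tendsto_snd)
    have h3 := ((tendsto_const_nhds (x := (1:ℂ)).sub (h1.mul h2)).inv₀ hlamne)
    exact h3.congr fun p => (kk p.1 p.2).symm
  have hconjc : conj ((1 - lam * conj lam)⁻¹) = (1 - lam * conj lam)⁻¹ := by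
    rw [map_inv₀, map_sub, map_one, map_mul, Complex.conj_conj, mul_comm]
  obtain ⟨K, hK⟩ := exists_tendsto_of_inner_tendsto' hconjc hinnerL
  set Λ : H →L[ℂ] ℂ := innerSL ℂ K with hΛdef
  have hΛlim : ∀ f : H, Tendsto (fun z : Ball d => J f z) L (𝓝 (Λ f)) := by
    intro f
    have h : Tendsto (fun z : Ball d => (inner ℂ (kf z) f : ℂ)) L (𝓝 (inner ℂ K f)) :=
      hK.inner tendsto_const_nhds
    exact h.congr fun z => (hrep f z).symm
  -- construction of β with J β = b
  have hz₀mem : Ball d ∈ 𝓝 z₀ := hball_open.mem_nhds hz₀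
  haveI : Nonempty (Fin d) := ⟨⟨0, hd⟩⟩
  haveI : Nontrivial (EuclideanSpace ℂ (Fin d)) := inferInstance
  set s₀ : Set (EuclideanSpace ℂ (Fin d)) := Ball d \ {z₀} with hs₀def
  haveI hF₀ne : (nhdsWithin z₀ s₀).NeBot := by
    have h1 : (𝓝[≠] z₀) = nhdsWithin z₀ s₀ := by
      rw [nhdsWithin_restrict' ({z₀}ᶜ) hz₀mem]
      congr 1
      ext x
      simp [hs₀def, and_comm]
    rw [← h1]
    exact Module.punctured_nhds_neBot ℂ _ z₀
  set L₀ : Filter (Ball d) := Filter.comap Subtype.val (nhdsWithin z₀ s₀) with hL₀def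
  haveI hL₀ne : L₀.NeBot := neBot_comap' self_mem_nhdsWithin (fun y hy => ⟨⟨y, hy.1⟩, rfl⟩)
  have hbz : Tendsto (fun w : Ball d => b w.1) L₀ (𝓝 0) := by
    have hca : ContinuousAt b z₀ := (hb_hol.differentiableAt hz₀mem).continuousAt
    have h := (hca.continuousWithinAt (s := s₀)).tendsto
    rw [hbz₀] at h
    exact h.comp tendsto_comap
  have hev0 : ∀ᶠ w : Ball d in L₀, b w.1 ≠ 0 := by
    have hmem : (Subtype.val ⁻¹' s₀ : Set (Ball d)) ∈ L₀ :=
      Filter.preimage_mem_comap self_mem_nhdsWithin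
    filter_upwards [hmem] with w hw
    intro hb0
    exact hw.2 (hb_inj w.2 hz₀ (by rw [hb0, hbz₀]))
  set u : Ball d → H := fun w => (conj (b w.1))⁻¹ • (kf w - kf e) with hudef
  have hinner0 : Tendsto (fun p : Ball d × Ball d => (inner ℂ (u p.1) (u p.2) : ℂ)) (L₀ ×ˢ L₀)
      (𝓝 1) := by
    have hev : ∀ᶠ p : Ball d × Ball d in L₀ ×ˢ L₀,
        (inner ℂ (u p.1) (u p.2) : ℂ) = (1 - b p.1.1 * conj (b p.2.1))⁻¹ := by
      filter_upwards [tendsto_fst.eventually hev0, tendsto_snd.eventually hev0] with p h1 h2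
      have hne : (1 : ℂ) - b p.1.1 * conj (b p.2.1) ≠ 0 :=
        one_sub_mul_ne_zero'_s15 (hb_into _ p.1.2) (by rw [RCLike.norm_conj]; exact (hb_into _ p.2.2).le)
      have hc2 : conj (b p.2.1) ≠ 0 := by simpa using h2
      simp only [hudef, inner_smul_left, inner_smul_right, inner_sub_left, inner_sub_right,
        kk, he, hbz₀, map_zero, mul_zero, zero_mul, sub_zero, inv_one, map_inv₀,
        Complex.conj_conj]
      field_simp
      rw [mul_comm] at hne
      rw [sub_self, sub_zero, div_sub_one hne]
      ring
    have hlim : Tendsto (fun p : Ball d × Ball d => ((1:ℂ) - b p.1.1 * conj (b p.2.1))⁻¹)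
        (L₀ ×ˢ L₀) (𝓝 1) := by
      have h1 := hbz.comp (tendsto_fst (f := L₀) (g := L₀))
      have h2 := (Complex.continuous_conj.tendsto 0).comp
        (hbz.comp (tendsto_snd (f := L₀) (g := L₀)))
      have h3 := ((tendsto_const_nhds (x := (1:ℂ)).sub (h1.mul h2)).inv₀ (by simp))
      simpa using h3
    exact Filter.Tendsto.congr' (Filter.EventuallyEq.symm hev) hlim
  obtain ⟨β, hβ⟩ := exists_tendsto_of_inner_tendsto' (by simp) hinner0
  have hJβ : ∀ z : Ball d, J β z = b z.1 := by
    intro z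
    have hlim1 : Tendsto (fun w : Ball d => (inner ℂ (kf z) (u w) : ℂ)) L₀
        (𝓝 (inner ℂ (kf z) β)) := Filter.Tendsto.inner tendsto_const_nhds hβ
    have hlim2 : Tendsto (fun w : Ball d => (inner ℂ (kf z) (u w) : ℂ)) L₀ (𝓝 (b z.1)) := by
      have hev : ∀ᶠ w : Ball d in L₀,
          (inner ℂ (kf z) (u w) : ℂ) = b z.1 * (1 - b z.1 * conj (b w.1))⁻¹ := by
        filter_upwards [hev0] with w hw
        have hne : (1 : ℂ) - b z.1 * conj (b w.1) ≠ 0 :=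
          one_sub_mul_ne_zero'_s15 (hb_into _ z.2) (by rw [RCLike.norm_conj]; exact (hb_into _ w.2).le)
        have hcne : conj (b w.1) ≠ 0 := by simpa using hw
        simp only [hudef, inner_smul_right, inner_sub_right, kk, he, hbz₀, map_zero,
          mul_zero, sub_zero, inv_one]
        field_simp
        rw [mul_comm] at hne
        rw [div_sub_one hne]
        ring
      have hlim : Tendsto (fun w : Ball d => b z.1 * (1 - b z.1 * conj (b w.1))⁻¹) L₀
          (𝓝 (b z.1)) := by
        have h2 := (Complex.continuous_conj.tendsto 0).comp hbz
        have h3 := (tendsto_const_nhds (x := b z.1)).mul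
          (((tendsto_const_nhds (x := (1:ℂ))).sub ((tendsto_const_nhds (x := b z.1)).mul h2)).inv₀
            (by simp))
        simpa using h3
      exact Filter.Tendsto.congr' (Filter.EventuallyEq.symm hev) hlim
    have huniq := tendsto_nhds_unique hlim1 hlim2
    rw [hrep β z, huniq]
  refine ⟨Λ, hΛlim, ?_, ?_, ?_⟩
  · intro one hone
    have h1 : Tendsto (fun z : Ball d => J one z) L (𝓝 1) := by
      simp only [hone]
      exact tendsto_const_nhds
    exact tendsto_nhds_unique (hΛlim one) h1
  · intro f g h hprod
    have h2 : Tendsto (fun z : Ball d => J h z) L (𝓝 (Λ f * Λ g)) := by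
      have hm := (hΛlim f).mul (hΛlim g)
      refine hm.congr fun z => ?_
      rw [hprod]
      rfl
    exact tendsto_nhds_unique (hΛlim h) h2
  · intro w
    set μ : ℂ := conj (b w.1) with hμdef
    have hμle : ‖μ‖ ≤ 1 := by rw [hμdef, RCLike.norm_conj]; exact (hb_into _ w.2).le
    have hAne : (1 : ℂ) - lam * μ ≠ 0 := one_sub_mul_ne_zero'_s15 hlam hμle
    refine ⟨kf e - μ • β, ?_, ?_⟩
    · funext z
      have : J (kf e - μ • β) z = J (kf e) z - μ * J β z := by
        simp [map_sub, map_smul]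
      rw [this, hJβ z, hkf e]
      simp only [he, hbz₀, map_zero, mul_zero, sub_zero, inv_one]
      ring
    · have hg : Tendsto (fun z : Ball d => J (kf e - μ • β) z) L (𝓝 (1 - lam * μ)) := by
        have hfun : ∀ z : Ball d, J (kf e - μ • β) z = 1 - b z.1 * μ := by
          intro z
          have : J (kf e - μ • β) z = J (kf e) z - μ * J β z := by
            simp [map_sub, map_smul]
          rw [this, hJβ z, hkf e]
          simp only [he, hbz₀, map_zero, mul_zero, sub_zero, inv_one]
          ring
        have h3 := (tendsto_const_nhds (x := (1:ℂ))).sub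
          (hbL.mul (tendsto_const_nhds (x := μ)))
        exact h3.congr fun z => (hfun z).symm
      have hk : Tendsto (fun z : Ball d => J (kf w) z) L (𝓝 ((1 - lam * μ)⁻¹)) := by
        have h3 := ((tendsto_const_nhds (x := (1:ℂ))).sub
          (hbL.mul (tendsto_const_nhds (x := μ)))).inv₀ hAne
        refine h3.congr fun z => ?_
        rw [hkf w]
      have e1 := tendsto_nhds_unique (hΛlim _) hg
      have e2 := tendsto_nhds_unique (hΛlim _) hk
      rw [e1, e2]
      exact mul_inv_cancel₀ hAne
end
end
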